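/- Let $(a_{\ell})_{\ell \in \mathbb{Z}}$ with $a_{\ell} = 1/(1+|\ell|)$ and let $(b_{\ell})_{\ell \in \mathbb{Z}}$ satisfy $0 < b_{\ell} \le b_0 = 1$ for all $\ell \ne 0$ and $\lim_{|\ell| \to \infty} a_{\ell}/b_{\ell} = 1$. For $0 < \varepsilon \le 1$ set $A_d(\varepsilon) = \#\{k \in \mathbb{Z}^d : \prod_{j=1}^d a_{k_j} \ge \varepsilon\}$ and $B_d(\varepsilon) = \#\{k \in \mathbb{Z}^d : \prod_{j=1}^d b_{k_j} \ge \varepsilon\}$. Then $\lim_{\varepsilon \downarrow 0} B_d(\varepsilon)/A_d(\varepsilon) = 1$. -/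

import Mathlib

open Filter

namespace Stmt19

open Finset Topology


/-- counting finset: `k : Fin d → ℤ` with `∏ (|k j| + 1) ≤ n`. -/
noncomputable def Kt (d n : ℕ) : Finset (Fin d → ℤ) :=
  (Fintype.piFinset fun _ : Fin d => Finset.Icc (-(n : ℤ)) (n : ℤ)).filter
    fun k => ∏ j, ((k j).natAbs + 1) ≤ n

noncomputable def N (d n : ℕ) : ℕ := (Kt d n).card

lemma mem_Kt {d n : ℕ} {k : Fin d → ℤ} :
    k ∈ Kt d n ↔ ∏ j, ((k j).natAbs + 1) ≤ n := by
  unfold Kt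
  simp only [Finset.mem_filter, Fintype.mem_piFinset, Finset.mem_Icc, and_iff_right_iff_imp]
  intro h j
  have h1 : (k j).natAbs + 1 ≤ n :=
    le_trans (Finset.single_le_prod' (f := fun j => ((k j).natAbs + 1))
      (fun i _ => Nat.le_add_left 1 _) (Finset.mem_univ j)) h
  omega

lemma N_mono (d : ℕ) : Monotone (N d) := fun m n h =>
  Finset.card_le_card fun k hk => mem_Kt.2 (le_trans (mem_Kt.1 hk) h)

lemma N_pos (d : ℕ) {n : ℕ} (hn : 1 ≤ n) : 0 < N d n := by
  refine Finset.card_pos.2 ⟨fun _ => 0, mem_Kt.2 ?_⟩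
  simp [hn]

lemma N_zero (d : ℕ) : N d 0 = 0 := by
  refine Finset.card_eq_zero.2 (Finset.eq_empty_of_forall_notMem fun k hk => ?_)
  have := mem_Kt.1 hk
  have h1 : 0 < ∏ j, ((k j).natAbs + 1) := Finset.prod_pos fun i _ => Nat.succ_pos _
  omega

lemma N_zero_dim {n : ℕ} (hn : 1 ≤ n) : N 0 n = 1 := by
  refine le_antisymm (Finset.card_le_one.2 fun a _ b _ => Subsingleton.elim a b) ?_
  exact Finset.card_pos.2 ⟨fun _ => 0, mem_Kt.2 (by simp [hn])⟩

lemma N_one {n : ℕ} (hn : 1 ≤ n) : N 1 n = 2 * n - 1 := by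
  have : Kt 1 n = (Finset.Icc (-(n:ℤ) + 1) ((n:ℤ) - 1)).image (fun ℓ => fun _ : Fin 1 => ℓ) := by
    ext k
    simp only [mem_Kt, Finset.mem_image, Finset.mem_Icc, Fin.prod_univ_one]
    constructor
    · intro h
      exact ⟨k 0, by omega, funext fun j => by rw [Subsingleton.elim j 0]⟩
    · rintro ⟨ℓ, hℓ, rfl⟩
      simp only []
      omega
  rw [N, this, Finset.card_image_of_injective _ (fun x y hxy => congrFun hxy 0), Int.card_Icc]
  omega

lemma Kt_succ (d n : ℕ) :
    Kt (d+1) n = (Finset.Icc (-(n:ℤ)) (n:ℤ)).biUnion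
      (fun ℓ => (Kt d (n / (ℓ.natAbs + 1))).image (Fin.cons ℓ)) := by
  ext k
  simp only [Finset.mem_biUnion, Finset.mem_image, mem_Kt, Finset.mem_Icc]
  constructor
  · intro h
    have hn1 : 1 ≤ n := by
      have h1 : 0 < ∏ j, ((k j).natAbs + 1) := Finset.prod_pos fun i _ => Nat.succ_pos _
      omega
    have hsplit : ∏ j : Fin (d+1), ((k j).natAbs + 1)
        = ((k 0).natAbs + 1) * ∏ j : Fin d, ((Fin.tail k j).natAbs + 1) :=
      Fin.prod_univ_succ _
    have hk0 : (k 0).natAbs + 1 ≤ n := by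
      refine le_trans ?_ h
      exact Finset.single_le_prod' (f := fun j => ((k j).natAbs + 1))
        (fun i _ => Nat.le_add_left 1 _) (Finset.mem_univ 0)
    refine ⟨k 0, by omega, Fin.tail k, ?_, Fin.cons_self_tail k⟩
    rw [Nat.le_div_iff_mul_le (by omega : 0 < (k 0).natAbs + 1)]
    rw [hsplit] at h
    calc (∏ j : Fin d, ((Fin.tail k j).natAbs + 1)) * ((k 0).natAbs + 1)
        = ((k 0).natAbs + 1) * ∏ j : Fin d, ((Fin.tail k j).natAbs + 1) := mul_comm _ _
      _ ≤ n := h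
  · rintro ⟨ℓ, hℓ, v, hv, rfl⟩
    rw [Nat.le_div_iff_mul_le (by omega : 0 < ℓ.natAbs + 1)] at hv
    have hsplit : ∏ j : Fin (d+1), (((Fin.cons ℓ v : Fin (d+1) → ℤ) j).natAbs + 1)
        = (ℓ.natAbs + 1) * ∏ j : Fin d, ((v j).natAbs + 1) := by
      rw [Fin.prod_univ_succ]
      simp
    rw [hsplit, mul_comm]
    exact hv

lemma N_succ (d n : ℕ) :
    N (d+1) n = ∑ ℓ ∈ Finset.Icc (-(n:ℤ)) (n:ℤ), N d (n / (ℓ.natAbs + 1)) := by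
  rw [N, Kt_succ, Finset.card_biUnion]
  · exact Finset.sum_congr rfl fun ℓ _ => Finset.card_image_of_injective _
      (Fin.cons_right_injective (α := fun _ : Fin (d+1) => ℤ) ℓ)
  · intro x _ y _ hxy
    simp only [Finset.disjoint_left, Finset.mem_image]
    rintro k ⟨u, _, rfl⟩ ⟨v, _, hv⟩
    have h0 := congrFun hv 0
    simp only [Fin.cons_zero] at h0
    exact hxy h0.symm

lemma sum_natAbs (g : ℕ → ℕ) (n : ℕ) :
    ∑ ℓ ∈ Finset.Icc (-(n:ℤ)) (n:ℤ), g ℓ.natAbs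
      = g 0 + 2 * ∑ m ∈ Finset.Icc 1 n, g m := by
  induction n with
  | zero => simp
  | succ n ih =>
    have h1 : Finset.Icc (-(n+1:ℕ):ℤ) ((n+1:ℕ):ℤ)
        = insert (-(n+1:ℕ):ℤ) (insert ((n+1:ℕ):ℤ) (Finset.Icc (-(n:ℕ):ℤ) (n:ℤ))) := by
      ext ℓ
      simp only [Finset.mem_insert, Finset.mem_Icc]
      omega
    have h2 : Finset.Icc 1 (n+1) = insert (n+1) (Finset.Icc 1 n) := by
      ext m; simp only [Finset.mem_insert, Finset.mem_Icc]; omega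
    rw [h1, Finset.sum_insert (by simp only [Finset.mem_insert, Finset.mem_Icc]; omega),
      Finset.sum_insert (by simp only [Finset.mem_Icc]; omega), ih, h2,
      Finset.sum_insert (by simp only [Finset.mem_Icc]; omega)]
    have e1 : ((-((n+1:ℕ):ℤ))).natAbs = n+1 := by push_cast; omega
    have e2 : ((((n+1:ℕ):ℤ))).natAbs = n+1 := by push_cast; omega
    rw [e1, e2]
    ring

/-- the harmonic-type sum. -/
noncomputable def S (d n : ℕ) : ℕ := ∑ m ∈ Finset.Icc 1 n, N d (n / m)

lemma N_succ_S (d n : ℕ) : N (d+1) n + N d n = 2 * S d n := by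
  rcases Nat.eq_zero_or_pos n with rfl | hn
  · simp [N_zero, S]
  rw [N_succ, sum_natAbs (fun m => N d (n / (m+1))) n]
  have h3 : ∑ m ∈ Finset.Icc 1 n, N d (n / (m + 1))
      = ∑ m ∈ Finset.Icc 2 (n+1), N d (n / m) := by
    rw [show (2:ℕ) = 1 + 1 by rfl, show n + 1 = n + 1 by rfl]
    rw [← Finset.map_add_right_Icc 1 n 1, Finset.sum_map]
    simp
  have h4 : Finset.Icc 1 (n+1) = insert 1 (Finset.Icc 2 (n+1)) := by
    ext m; simp only [Finset.mem_insert, Finset.mem_Icc]; omega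
  have h5 : Finset.Icc 1 (n+1) = insert (n+1) (Finset.Icc 1 n) := by
    ext m; simp only [Finset.mem_insert, Finset.mem_Icc]; omega
  have h6 : ∑ m ∈ Finset.Icc 1 (n+1), N d (n / m)
      = N d n + ∑ m ∈ Finset.Icc 2 (n+1), N d (n / m) := by
    rw [h4, Finset.sum_insert (by simp only [Finset.mem_Icc]; omega)]
    simp
  have h7 : ∑ m ∈ Finset.Icc 1 (n+1), N d (n / m) = S d n := by
    rw [h5, Finset.sum_insert (by simp only [Finset.mem_Icc]; omega)]
    have : n / (n+1) = 0 := Nat.div_eq_of_lt (by omega)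
    rw [this, N_zero, S]
    omega
  simp only [zero_add, Nat.div_one] at h3 h6 h7 ⊢
  omega


lemma S_def (d n : ℕ) : S d n = ∑ m ∈ Finset.Icc 1 n, N d (n / m) := rfl

lemma integral_log_pow (p : ℕ) (c y : ℝ) (hy : 1 ≤ y) :
    ∫ t in (1:ℝ)..y, (c - Real.log t)^p / t
      = (c^(p+1) - (c - Real.log y)^(p+1)) / (p+1) := by
  have key : ∀ t ∈ Set.uIcc (1:ℝ) y,
      HasDerivAt (fun u => -((c - Real.log u)^(p+1)) / ((p:ℝ)+1)) ((c - Real.log t)^p / t) t := by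
    intro t ht
    rw [Set.uIcc_of_le hy] at ht
    have ht0 : (0:ℝ) < t := lt_of_lt_of_le one_pos ht.1
    have h1 : HasDerivAt (fun u : ℝ => c - Real.log u) (-t⁻¹) t := by
      simpa using (Real.hasDerivAt_log (ne_of_gt ht0)).const_sub c
    have h2 := ((h1.pow (p+1)).neg).div_const ((p:ℝ)+1)
    refine h2.congr_deriv ?_
    have hp1 : ((p:ℝ)+1) ≠ 0 := by positivity
    rw [Nat.add_sub_cancel]
    push_cast
    field_simp
  rw [intervalIntegral.integral_eq_sub_of_hasDerivAt key ?_]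
  · rw [Real.log_one]
    have hp1 : ((p:ℝ)+1) ≠ 0 := by positivity
    push_cast
    field_simp
    ring
  · apply ContinuousOn.intervalIntegrable
    apply ContinuousOn.div
    · exact (continuousOn_const.sub (Real.continuousOn_log.mono (by
        intro t ht
        rw [Set.uIcc_of_le hy] at ht
        simp only [Set.mem_compl_iff, Set.mem_singleton_iff]
        intro h; rw [h] at ht; exact absurd ht.1 (by norm_num)))).pow p
    · exact continuousOn_id
    · intro t ht
      rw [Set.uIcc_of_le hy] at ht
      exact ne_of_gt (lt_of_lt_of_le one_pos ht.1)

lemma antitone_aux (p : ℕ) (c y : ℝ) (hc : Real.log y ≤ c) :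
    AntitoneOn (fun t => (c - Real.log t)^p / t) (Set.Icc 1 y) := by
  intro s hs t ht hst
  simp only [Set.mem_Icc] at hs ht
  have h0s : (0:ℝ) < s := lt_of_lt_of_le one_pos hs.1
  have h0t : (0:ℝ) < t := lt_of_lt_of_le one_pos ht.1
  have hlogt : Real.log t ≤ c := le_trans (Real.log_le_log h0t ht.2) hc
  have hlogst : Real.log s ≤ Real.log t := Real.log_le_log h0s hst
  exact div_le_div₀ (pow_nonneg (by linarith) p)
    (pow_le_pow_left₀ (by linarith) (by linarith) p) h0s hst

lemma sum_f_le (p n : ℕ) (hn : 1 ≤ n) :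
    ∑ m ∈ Finset.Icc 1 n, (Real.log n - Real.log m)^p / m
      ≤ (Real.log n)^p + (Real.log n)^(p+1) / ((p:ℝ)+1) := by
  set F : ℝ → ℝ := fun t => (Real.log n - Real.log t)^p / t with hF
  have hcast : (1 : ℝ) + ((n-1:ℕ):ℝ) = (n:ℝ) := by
    rw [Nat.cast_sub hn]; push_cast; ring
  have hanti : AntitoneOn F (Set.Icc 1 (1 + ((n-1:ℕ):ℝ))) := by
    rw [hcast]; exact antitone_aux p _ _ le_rfl
  have key := hanti.sum_le_integral
  rw [hcast] at key
  have hval : ∫ t in (1:ℝ)..(n:ℝ), F t = (Real.log n)^(p+1) / ((p:ℝ)+1) := by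
    rw [hF, integral_log_pow p _ _ (by exact_mod_cast hn)]
    simp [sub_self]
  rw [hval] at key
  have hsplit : Finset.Icc 1 n = insert 1 (Finset.Icc 2 n) := by
    ext m; simp only [Finset.mem_insert, Finset.mem_Icc]; omega
  rw [hsplit, Finset.sum_insert (by simp only [Finset.mem_Icc]; omega)]
  have t1 : (Real.log (n:ℝ) - Real.log ((1:ℕ):ℝ))^p / ((1:ℕ):ℝ) = (Real.log n)^p := by
    simp
  have hiden : ∑ m ∈ Finset.Icc 2 n, (Real.log n - Real.log m)^p / (m:ℝ)
      = ∑ i ∈ Finset.range (n-1), F (1 + ((i+1:ℕ):ℝ)) := by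
    rw [← Finset.Ico_add_one_right_eq_Icc, Finset.sum_Ico_eq_sum_range]
    refine Finset.sum_congr (by congr 1 <;> omega) (fun i _ => ?_)
    have : ((2+i:ℕ):ℝ) = 1 + ((i+1:ℕ):ℝ) := by push_cast; ring
    rw [hF]
    simp only []
    rw [this]
  rw [t1, hiden]
  exact add_le_add_right key _

lemma le_sum_f (p n M : ℕ) (hM : 1 ≤ M) (hMn : M ≤ n) :
    ((Real.log n)^(p+1) - (Real.log n - Real.log M)^(p+1)) / ((p:ℝ)+1)
      ≤ ∑ m ∈ Finset.Icc 1 M, (Real.log n - Real.log m)^p / m := by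
  set F : ℝ → ℝ := fun t => (Real.log n - Real.log t)^p / t with hF
  have hn : 1 ≤ n := le_trans hM hMn
  have hlogM : Real.log (M:ℝ) ≤ Real.log (n:ℝ) :=
    Real.log_le_log (by exact_mod_cast hM) (by exact_mod_cast hMn)
  have hcast : (1 : ℝ) + ((M-1:ℕ):ℝ) = (M:ℝ) := by
    rw [Nat.cast_sub hM]; push_cast; ring
  have hanti : AntitoneOn F (Set.Icc 1 (1 + ((M-1:ℕ):ℝ))) := by
    rw [hcast]; exact antitone_aux p _ _ hlogM
  have key := hanti.integral_le_sum
  rw [hcast] at key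
  have hval : ∫ t in (1:ℝ)..(M:ℝ), F t
      = ((Real.log n)^(p+1) - (Real.log n - Real.log M)^(p+1)) / ((p:ℝ)+1) := by
    rw [hF, integral_log_pow p _ _ (by exact_mod_cast hM)]
  rw [hval] at key
  refine le_trans key ?_
  have hiden : ∑ i ∈ Finset.range (M-1), F (1 + (i:ℝ))
      = ∑ m ∈ Finset.Icc 1 (M-1), (Real.log n - Real.log m)^p / (m:ℝ) := by
    rw [← Finset.Ico_add_one_right_eq_Icc, Finset.sum_Ico_eq_sum_range]
    refine (Finset.sum_congr (by congr 1 <;> omega) (fun i _ => ?_)).symm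
    have : ((1+i:ℕ):ℝ) = 1 + (i:ℝ) := by push_cast; ring
    rw [hF]
    simp only []
    rw [this]
  rw [hiden]
  refine Finset.sum_le_sum_of_subset_of_nonneg ?_ ?_
  · intro m hm
    simp only [Finset.mem_Icc] at hm ⊢
    omega
  · intro m hm _
    simp only [Finset.mem_Icc] at hm
    have h0m : (0:ℝ) < (m:ℝ) := by exact_mod_cast hm.1
    have hmn : Real.log (m:ℝ) ≤ Real.log (n:ℝ) :=
      Real.log_le_log h0m (by exact_mod_cast le_trans hm.2 hMn)
    exact div_nonneg (pow_nonneg (by linarith) p) (le_of_lt h0m)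


lemma tendsto_gamma (p : ℕ) :
    Tendsto (fun K : ℕ => (1 - 1/(2*(K:ℝ))) * (1 - Real.log 2 / Real.log (2*(K:ℝ)))^p)
      atTop (𝓝 1) := by
  have hcast : Tendsto (fun K : ℕ => 2*(K:ℝ)) atTop atTop :=
    (tendsto_natCast_atTop_atTop (R := ℝ)).const_mul_atTop two_pos
  have t1 : Tendsto (fun K : ℕ => 1 - 1/(2*(K:ℝ))) atTop (𝓝 (1 - 0)) :=
    tendsto_const_nhds.sub (tendsto_const_nhds.div_atTop hcast)
  have t2 : Tendsto (fun K : ℕ => Real.log 2 / Real.log (2*(K:ℝ))) atTop (𝓝 0) :=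
    tendsto_const_nhds.div_atTop (Real.tendsto_log_atTop.comp hcast)
  have t3 : Tendsto (fun K : ℕ => (1 : ℝ) - Real.log 2 / Real.log (2*(K:ℝ)))
      atTop (𝓝 (1 - 0)) := tendsto_const_nhds.sub t2
  have := t1.mul (t3.pow p)
  simpa using this

set_option maxHeartbeats 2000000 in
lemma tendsto_S_main (d : ℕ) (hd : 1 ≤ d) (c : ℝ) (hc : 0 < c)
    (h : Tendsto (fun n : ℕ => (N d n : ℝ) / (n * (Real.log n)^(d-1))) atTop (𝓝 c)) :
    Tendsto (fun n : ℕ => (S d n : ℝ) / (n * (Real.log n)^d)) atTop (𝓝 (c / d)) := by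
  obtain ⟨p, rfl⟩ : ∃ p, d = p + 1 := ⟨d - 1, by omega⟩
  simp only [Nat.add_sub_cancel] at h
  rw [Metric.tendsto_nhds]
  intro ε₀ hε₀
  have hp1 : (0:ℝ) < (p:ℝ) + 1 := by positivity
  set δ : ℝ := min (c/2) (((p:ℝ)+1) * ε₀/4) with hδdef
  have hδpos : 0 < δ := lt_min (by positivity) (by positivity)
  have hδc : δ ≤ c/2 := min_le_left _ _
  have hδε : δ ≤ ((p:ℝ)+1) * ε₀/4 := min_le_right _ _
  set η : ℝ := min (1/2) (((p:ℝ)+1) * ε₀/(8*c)) with hηdef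
  have hηpos : 0 < η := lt_min (by norm_num) (by positivity)
  have hη1 : η ≤ 1/2 := min_le_left _ _
  have hηε : η ≤ ((p:ℝ)+1) * ε₀/(8*c) := min_le_right _ _
  obtain ⟨K₁, hK₁⟩ := (Metric.tendsto_atTop.1 h) δ hδpos
  obtain ⟨K₂, hK₂⟩ := (Metric.tendsto_atTop.1 (tendsto_gamma p)) η hηpos
  set K : ℕ := max (max K₁ K₂) 2 with hKdef
  have hK2 : 2 ≤ K := le_max_right _ _
  have hKK₁ : K₁ ≤ K := le_trans (le_max_left _ _) (le_max_left _ _)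
  have hKK₂ : K₂ ≤ K := le_trans (le_max_right _ _) (le_max_left _ _)
  have hKR : (2:ℝ) ≤ (K:ℝ) := by exact_mod_cast hK2
  have hγ : 1 - η ≤ (1 - 1/(2*(K:ℝ))) * (1 - Real.log 2 / Real.log (2*(K:ℝ)))^p := by
    have := hK₂ K hKK₂
    rw [Real.dist_eq, abs_sub_lt_iff] at this
    linarith [this.2]
  have hlog2Kpos : 0 < Real.log (2*(K:ℝ)) := Real.log_pos (by linarith)
  -- two-sided bounds on N from the limit hypothesis
  have hNub : ∀ k : ℕ, K ≤ k → (N (p+1) k : ℝ) ≤ (c + δ) * ((k:ℝ) * (Real.log k)^p) := by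
    intro k hk
    have hk2 : (2:ℝ) ≤ (k:ℝ) := le_trans hKR (by exact_mod_cast hk)
    have hlogk : 0 < Real.log k := Real.log_pos (by linarith)
    have hdk := hK₁ k (le_trans hKK₁ hk)
    rw [Real.dist_eq, abs_sub_lt_iff] at hdk
    have hden : (0:ℝ) < (k:ℝ) * (Real.log k)^p := by positivity
    have h1 : (N (p+1) k : ℝ) / ((k:ℝ) * (Real.log k)^p) ≤ c + δ := by linarith [hdk.1]
    calc (N (p+1) k : ℝ) = ((N (p+1) k : ℝ) / ((k:ℝ)*(Real.log k)^p)) * ((k:ℝ)*(Real.log k)^p) := by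
          field_simp
      _ ≤ (c + δ) * ((k:ℝ) * (Real.log k)^p) := mul_le_mul_of_nonneg_right h1 (le_of_lt hden)
  have hNlb : ∀ k : ℕ, K ≤ k → (c - δ) * ((k:ℝ) * (Real.log k)^p) ≤ (N (p+1) k : ℝ) := by
    intro k hk
    have hk2 : (2:ℝ) ≤ (k:ℝ) := le_trans hKR (by exact_mod_cast hk)
    have hlogk : 0 < Real.log k := Real.log_pos (by linarith)
    have hdk := hK₁ k (le_trans hKK₁ hk)
    rw [Real.dist_eq, abs_sub_lt_iff] at hdk
    have hden : (0:ℝ) < (k:ℝ) * (Real.log k)^p := by positivity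
    have h1 : c - δ ≤ (N (p+1) k : ℝ) / ((k:ℝ) * (Real.log k)^p) := by linarith [hdk.2]
    calc (c - δ) * ((k:ℝ) * (Real.log k)^p)
        ≤ ((N (p+1) k : ℝ) / ((k:ℝ)*(Real.log k)^p)) * ((k:ℝ)*(Real.log k)^p) :=
          mul_le_mul_of_nonneg_right h1 (le_of_lt hden)
      _ = (N (p+1) k : ℝ) := by field_simp
  set CK : ℕ := N (p+1) K with hCK
  -- upper eventual bound
  have hEU : ∀ n : ℕ, 3 ≤ n →
      (S (p+1) n : ℝ) / ((n:ℝ) * (Real.log n)^(p+1))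
        ≤ (c+δ)/((p:ℝ)+1) + (c+δ)/Real.log n + (CK:ℝ)/(Real.log n)^(p+1) := by
    intro n hn
    have hn1 : (1:ℝ) < (n:ℝ) := by exact_mod_cast (by omega : 1 < n)
    have hlogn : 0 < Real.log n := Real.log_pos hn1
    have hterm : ∀ m ∈ Finset.Icc 1 n,
        (N (p+1) (n/m) : ℝ) ≤ (c+δ) * ((n:ℝ) * ((Real.log n - Real.log m)^p / m)) + CK := by
      intro m hm
      simp only [Finset.mem_Icc] at hm
      have hm0 : (0:ℝ) < (m:ℝ) := by exact_mod_cast hm.1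
      have hmn : (m:ℝ) ≤ (n:ℝ) := by exact_mod_cast hm.2
      have hnm1 : (1:ℝ) ≤ (n:ℝ)/m := by rw [le_div_iff₀ hm0]; linarith
      have hlognm : 0 ≤ Real.log ((n:ℝ)/m) := Real.log_nonneg hnm1
      have hlogeq : Real.log ((n:ℝ)/m) = Real.log n - Real.log m :=
        Real.log_div (by positivity) (ne_of_gt hm0)
      have hxid : (c+δ) * ((n:ℝ) * ((Real.log n - Real.log m)^p / m))
          = (c+δ) * (((n:ℝ)/m) * (Real.log ((n:ℝ)/m))^p) := by rw [hlogeq]; ring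
      by_cases hcase : K ≤ n / m
      · have hub := hNub (n/m) hcase
        have hfl : ((n/m : ℕ):ℝ) ≤ (n:ℝ)/m := Nat.cast_div_le
        have hK2' : (2:ℝ) ≤ ((n/m:ℕ):ℝ) := le_trans hKR (by exact_mod_cast hcase)
        have hlogfl0 : 0 ≤ Real.log ((n/m:ℕ):ℝ) := Real.log_nonneg (by linarith)
        have hlogle : Real.log ((n/m:ℕ):ℝ) ≤ Real.log ((n:ℝ)/m) :=
          Real.log_le_log (by linarith) hfl
        have hstep : ((n/m:ℕ):ℝ) * (Real.log ((n/m:ℕ):ℝ))^p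
            ≤ ((n:ℝ)/m) * (Real.log ((n:ℝ)/m))^p :=
          mul_le_mul hfl (pow_le_pow_left₀ hlogfl0 hlogle p) (pow_nonneg hlogfl0 p)
            (by linarith)
        have hCKnn : (0:ℝ) ≤ (CK:ℝ) := Nat.cast_nonneg _
        calc (N (p+1) (n/m) : ℝ) ≤ (c+δ) * (((n/m:ℕ):ℝ) * (Real.log ((n/m:ℕ):ℝ))^p) := hub
          _ ≤ (c+δ) * (((n:ℝ)/m) * (Real.log ((n:ℝ)/m))^p) :=
              mul_le_mul_of_nonneg_left hstep (by linarith)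
          _ = (c+δ) * ((n:ℝ) * ((Real.log n - Real.log m)^p / m)) := hxid.symm
          _ ≤ _ := le_add_of_nonneg_right hCKnn
      · push_neg at hcase
        have hmono : (N (p+1) (n/m) : ℝ) ≤ (CK:ℝ) := by
          exact_mod_cast N_mono (p+1) (le_of_lt hcase)
        have hnn : 0 ≤ (c+δ) * ((n:ℝ) * ((Real.log n - Real.log m)^p / m)) := by
          have h0 : 0 ≤ (Real.log n - Real.log m) := by
            rw [← hlogeq]; exact hlognm
          have h1 : 0 ≤ (Real.log n - Real.log m)^p / m := by positivity
          have hcp : 0 ≤ c + δ := by linarith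
          positivity
        linarith
    have hsum := Finset.sum_le_sum hterm
    have hS : (S (p+1) n : ℝ) = ∑ m ∈ Finset.Icc 1 n, (N (p+1) (n/m) : ℝ) := by
      rw [S_def]; push_cast; rfl
    have hRHS : ∑ m ∈ Finset.Icc 1 n, ((c+δ) * ((n:ℝ) * ((Real.log n - Real.log m)^p / m)) + (CK:ℝ))
        = (c+δ) * (n:ℝ) * (∑ m ∈ Finset.Icc 1 n, (Real.log n - Real.log m)^p / m) + (n:ℝ)*(CK:ℝ) := by
      rw [Finset.sum_add_distrib, Finset.sum_const, Nat.card_Icc]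
      have h1 : ∑ m ∈ Finset.Icc 1 n, (c+δ)*((n:ℝ)*((Real.log n - Real.log m)^p / m))
          = (c+δ)*(n:ℝ)*∑ m ∈ Finset.Icc 1 n, (Real.log n - Real.log m)^p/m := by
        rw [Finset.mul_sum]
        exact Finset.sum_congr rfl fun m _ => by ring
      rw [h1]
      have h2 : (n + 1 - 1) • ((CK:ℕ):ℝ) = (n:ℝ)*((CK:ℕ):ℝ) := by
        simp only [Nat.add_sub_cancel, nsmul_eq_mul]
      rw [h2]
    have hchain : (S (p+1) n : ℝ)
        ≤ (c+δ) * (n:ℝ) * ((Real.log n)^p + (Real.log n)^(p+1) / ((p:ℝ)+1)) + (n:ℝ)*(CK:ℝ) := by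
      rw [hS]
      refine le_trans hsum ?_
      rw [hRHS]
      have hsf := sum_f_le p n (by omega)
      have hcp : (0:ℝ) ≤ (c+δ) * (n:ℝ) := by positivity
      nlinarith [hsf]
    have hden : (0:ℝ) < (n:ℝ) * (Real.log n)^(p+1) := by positivity
    rw [div_le_iff₀ hden]
    have hexp : ((c+δ)/((p:ℝ)+1) + (c+δ)/Real.log n + (CK:ℝ)/(Real.log n)^(p+1))
        * ((n:ℝ) * (Real.log n)^(p+1))
        = (c+δ) * (n:ℝ) * ((Real.log n)^p + (Real.log n)^(p+1) / ((p:ℝ)+1)) + (n:ℝ)*(CK:ℝ) := by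
      have hLne : Real.log (n:ℝ) ≠ 0 := ne_of_gt hlogn
      have hPne : ((p:ℝ)+1) ≠ 0 := ne_of_gt hp1
      rw [pow_succ]
      field_simp
      ring
    rw [hexp]
    exact hchain
  -- lower eventual bound
  have hEL : ∀ n : ℕ, 4*K ≤ n →
      (c - δ) * (1 - η) * ((1 - (Real.log (4*(K:ℝ)))^(p+1)/(Real.log n)^(p+1)) / ((p:ℝ)+1))
        ≤ (S (p+1) n : ℝ) / ((n:ℝ) * (Real.log n)^(p+1)) := by
    intro n hn
    have hKpos : 0 < K := by omega
    have hn8 : 8 ≤ n := by omega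
    have hn1 : (1:ℝ) < (n:ℝ) := by exact_mod_cast (by omega : 1 < n)
    have hlogn : 0 < Real.log n := Real.log_pos hn1
    set M : ℕ := n / (2*K) with hMdef
    have h2Kpos : 0 < 2*K := by omega
    have hM1 : 1 ≤ M := by
      rw [hMdef, Nat.one_le_div_iff h2Kpos]; omega
    have hMn : M ≤ n := le_trans (Nat.div_le_self _ _) le_rfl
    have hcδ : 0 < c - δ := by linarith
    have hη' : 0 < 1 - η := by linarith
    have hterm : ∀ m ∈ Finset.Icc 1 M,
        (c-δ) * (1-η) * ((n:ℝ) * ((Real.log n - Real.log m)^p / m)) ≤ (N (p+1) (n/m) : ℝ) := by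
      intro m hm
      simp only [Finset.mem_Icc] at hm
      have hm0 : 0 < m := hm.1
      have hmR : (0:ℝ) < (m:ℝ) := by exact_mod_cast hm0
      set q : ℕ := n / m with hqdef
      have hq2K : 2*K ≤ q := by
        rw [hqdef, Nat.le_div_iff_mul_le hm0]
        have h1 := (Nat.le_div_iff_mul_le h2Kpos).1 hm.2
        calc 2*K*m = m*(2*K) := by ring
          _ ≤ n := h1
      have hqK : K ≤ q := by omega
      have hx2K : 2*(K:ℝ) ≤ (n:ℝ)/m := by
        rw [le_div_iff₀ hmR]
        have h1 : (2*K)*m ≤ n := by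
          have h2 := (Nat.le_div_iff_mul_le hm0).1 hq2K
          omega
        exact_mod_cast h1
      have hx4 : (4:ℝ) ≤ (n:ℝ)/m := by linarith
      have hqx : (n:ℝ)/m - 1 < (q:ℝ) := by
        have hlt : n < q*m + m := by
          rw [hqdef]
          exact Nat.lt_div_mul_add hm0
        have h1 : (n:ℝ) < (q:ℝ)*m + m := by exact_mod_cast hlt
        rw [div_sub_one (ne_of_gt hmR), div_lt_iff₀ hmR]
        nlinarith
      have hq1 : (1 - 1/(2*(K:ℝ))) * ((n:ℝ)/m) ≤ (q:ℝ) := by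
        have h2KR : (0:ℝ) < 2*(K:ℝ) := by linarith
        have hge1 : 1 ≤ ((n:ℝ)/m)/(2*(K:ℝ)) := by rw [one_le_div h2KR]; exact hx2K
        have hid : (1 - 1/(2*(K:ℝ))) * ((n:ℝ)/m) = (n:ℝ)/m - ((n:ℝ)/m)/(2*(K:ℝ)) := by
          field_simp
        rw [hid]
        linarith
      have hqhalf : (n:ℝ)/m / 2 ≤ (q:ℝ) := by linarith
      have hqpos : (0:ℝ) < (q:ℝ) := by
        have : 0 < q := by omega
        exact_mod_cast this
      have hlogq : Real.log ((n:ℝ)/m) - Real.log 2 ≤ Real.log q := by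
        have hh : Real.log ((n:ℝ)/m / 2) ≤ Real.log q :=
          Real.log_le_log (by linarith) hqhalf
        rwa [Real.log_div (by linarith) (by norm_num)] at hh
      have hlogx2K : Real.log (2*(K:ℝ)) ≤ Real.log ((n:ℝ)/m) :=
        Real.log_le_log (by linarith) hx2K
      have hfrac : (1 - Real.log 2 / Real.log (2*(K:ℝ))) * Real.log ((n:ℝ)/m) ≤ Real.log q := by
        have hlog2nn : (0:ℝ) ≤ Real.log 2 := Real.log_nonneg (by norm_num)
        have h1 : Real.log 2 ≤ Real.log 2 / Real.log (2*(K:ℝ)) * Real.log ((n:ℝ)/m) := by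
          rw [div_mul_eq_mul_div, le_div_iff₀ hlog2Kpos]
          exact mul_le_mul_of_nonneg_left hlogx2K hlog2nn
        nlinarith [hlogq]
      have hlogxnn : 0 ≤ Real.log ((n:ℝ)/m) := Real.log_nonneg (by linarith)
      have hfharnn : 0 ≤ (1 - Real.log 2 / Real.log (2*(K:ℝ))) * Real.log ((n:ℝ)/m) := by
        have hr1 : Real.log 2 ≤ Real.log (2*(K:ℝ)) :=
          Real.log_le_log two_pos (by linarith)
        have h0 : 0 ≤ 1 - Real.log 2 / Real.log (2*(K:ℝ)) := by
          have := div_le_one_of_le₀ hr1 (le_of_lt hlog2Kpos)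
          linarith
        positivity
      have hγle : ((1 - 1/(2*(K:ℝ))) * (1 - Real.log 2/Real.log (2*(K:ℝ)))^p)
          * (((n:ℝ)/m) * (Real.log ((n:ℝ)/m))^p) ≤ (q:ℝ)*(Real.log q)^p := by
        have e1 : ((1 - 1/(2*(K:ℝ))) * (1 - Real.log 2/Real.log (2*(K:ℝ)))^p)
            * (((n:ℝ)/m) * (Real.log ((n:ℝ)/m))^p)
            = ((1 - 1/(2*(K:ℝ))) * ((n:ℝ)/m))
              * (((1 - Real.log 2/Real.log (2*(K:ℝ))) * Real.log ((n:ℝ)/m))^p) := by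
          rw [mul_pow]; ring
        rw [e1]
        have hq1nn : 0 ≤ (1 - 1/(2*(K:ℝ))) * ((n:ℝ)/m) := by
          have h1 : 1/(2*(K:ℝ)) ≤ 1 := by
            rw [div_le_one (by linarith)]; linarith
          have hxpos : 0 ≤ (n:ℝ)/m := by positivity
          nlinarith
        exact mul_le_mul hq1 (pow_le_pow_left₀ hfharnn hfrac p) (pow_nonneg hfharnn p)
          (le_of_lt hqpos)
      have hlb := hNlb q hqK
      have hlogeq : Real.log ((n:ℝ)/m) = Real.log n - Real.log m :=
        Real.log_div (by positivity) (ne_of_gt hmR)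
      have hxid : (n:ℝ) * ((Real.log n - Real.log m)^p / m)
          = ((n:ℝ)/m) * (Real.log ((n:ℝ)/m))^p := by rw [hlogeq]; ring
      have hxnn : 0 ≤ ((n:ℝ)/m) * (Real.log ((n:ℝ)/m))^p := by positivity
      calc (c-δ) * (1-η) * ((n:ℝ) * ((Real.log n - Real.log m)^p / m))
          = (c-δ) * ((1-η) * (((n:ℝ)/m) * (Real.log ((n:ℝ)/m))^p)) := by rw [hxid]; ring
        _ ≤ (c-δ) * (((1 - 1/(2*(K:ℝ))) * (1 - Real.log 2/Real.log (2*(K:ℝ)))^p)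
              * (((n:ℝ)/m) * (Real.log ((n:ℝ)/m))^p)) := by
            apply mul_le_mul_of_nonneg_left _ (le_of_lt hcδ)
            exact mul_le_mul_of_nonneg_right hγ hxnn
        _ ≤ (c-δ) * ((q:ℝ)*(Real.log q)^p) :=
            mul_le_mul_of_nonneg_left hγle (le_of_lt hcδ)
        _ ≤ (N (p+1) q : ℝ) := by
            calc (c-δ) * ((q:ℝ)*(Real.log q)^p) = (c-δ) * ((q:ℝ) * (Real.log q)^p) := rfl
              _ ≤ (N (p+1) q : ℝ) := hlb
    have hsum := Finset.sum_le_sum hterm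
    have hsubset : ∑ m ∈ Finset.Icc 1 M, (N (p+1) (n/m) : ℝ) ≤ (S (p+1) n : ℝ) := by
      rw [S_def]
      push_cast
      refine Finset.sum_le_sum_of_subset_of_nonneg ?_ ?_
      · intro m hm; simp only [Finset.mem_Icc] at hm ⊢; omega
      · intro m _ _; positivity
    have hfsum : (c-δ)*(1-η)*(n:ℝ) * (((Real.log n)^(p+1) - (Real.log n - Real.log M)^(p+1)) / ((p:ℝ)+1))
        ≤ ∑ m ∈ Finset.Icc 1 M, (c-δ) * (1-η) * ((n:ℝ) * ((Real.log n - Real.log m)^p / m)) := by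
      have hsf := le_sum_f p n M hM1 hMn
      have hfac : (0:ℝ) ≤ (c-δ)*(1-η)*(n:ℝ) :=
        mul_nonneg (mul_nonneg hcδ.le hη'.le) (Nat.cast_nonneg n)
      calc (c-δ)*(1-η)*(n:ℝ) * (((Real.log n)^(p+1) - (Real.log n - Real.log M)^(p+1)) / ((p:ℝ)+1))
          ≤ (c-δ)*(1-η)*(n:ℝ) * (∑ m ∈ Finset.Icc 1 M, (Real.log n - Real.log m)^p / m) :=
            mul_le_mul_of_nonneg_left hsf hfac
        _ = ∑ m ∈ Finset.Icc 1 M, (c-δ) * (1-η) * ((n:ℝ) * ((Real.log n - Real.log m)^p / m)) := by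
            rw [Finset.mul_sum]
            exact Finset.sum_congr rfl fun m _ => by ring
    have hM4K : (n:ℝ) ≤ 4*(K:ℝ)*(M:ℝ) := by
      have hlt : n < M*(2*K) + 2*K := by
        rw [hMdef]
        exact Nat.lt_div_mul_add h2Kpos
      have h1 : (n:ℝ) < (M:ℝ)*(2*(K:ℝ)) + 2*(K:ℝ) := by exact_mod_cast hlt
      have h2 : 4*(K:ℝ) ≤ (n:ℝ) := by exact_mod_cast hn
      linarith
    have hMR : (0:ℝ) < (M:ℝ) := by exact_mod_cast hM1
    have hlogM : Real.log (M:ℝ) ≤ Real.log (n:ℝ) :=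
      Real.log_le_log hMR (by exact_mod_cast hMn)
    have hlogdiff : Real.log (n:ℝ) - Real.log (M:ℝ) ≤ Real.log (4*(K:ℝ)) := by
      have h1 : (n:ℝ)/(M:ℝ) ≤ 4*(K:ℝ) := by
        rw [div_le_iff₀ hMR]; linarith
      have h2 : Real.log ((n:ℝ)/(M:ℝ)) ≤ Real.log (4*(K:ℝ)) :=
        Real.log_le_log (by positivity) h1
      rwa [Real.log_div (by positivity) (ne_of_gt hMR)] at h2
    have hpow : (Real.log n - Real.log M)^(p+1) ≤ (Real.log (4*(K:ℝ)))^(p+1) :=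
      pow_le_pow_left₀ (by linarith) hlogdiff (p+1)
    have hchain2 : (c-δ)*(1-η)*(n:ℝ) * (((Real.log n)^(p+1) - (Real.log (4*(K:ℝ)))^(p+1)) / ((p:ℝ)+1))
        ≤ (S (p+1) n : ℝ) := by
      refine le_trans ?_ (le_trans hsum hsubset)
      refine le_trans ?_ hfsum
      have hfac3 : (0:ℝ) ≤ (c-δ)*(1-η)*(n:ℝ) :=
        mul_nonneg (mul_nonneg hcδ.le hη'.le) (Nat.cast_nonneg n)
      apply mul_le_mul_of_nonneg_left _ hfac3
      exact (div_le_div_iff_of_pos_right hp1).2 (by linarith [hpow])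
    have hden : (0:ℝ) < (n:ℝ) * (Real.log n)^(p+1) := by positivity
    rw [le_div_iff₀ hden]
    have hLne : Real.log (n:ℝ) ≠ 0 := ne_of_gt hlogn
    have hPne : ((p:ℝ)+1) ≠ 0 := ne_of_gt hp1
    have heq : (c-δ) * (1-η) * ((1 - (Real.log (4*(K:ℝ)))^(p+1)/(Real.log n)^(p+1)) / ((p:ℝ)+1))
        * ((n:ℝ) * (Real.log n)^(p+1))
        = (c-δ)*(1-η)*(n:ℝ) * (((Real.log n)^(p+1) - (Real.log (4*(K:ℝ)))^(p+1)) / ((p:ℝ)+1)) := by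
      have hLp : (Real.log (n:ℝ))^(p+1) ≠ 0 := pow_ne_zero _ hLne
      field_simp
    rw [heq]
    exact hchain2
  -- limits of the two bounds
  have hlogT : Tendsto (fun n : ℕ => Real.log n) atTop atTop :=
    Real.tendsto_log_atTop.comp tendsto_natCast_atTop_atTop
  have hU : Tendsto (fun n : ℕ =>
      (c+δ)/((p:ℝ)+1) + (c+δ)/Real.log n + (CK:ℝ)/(Real.log n)^(p+1))
      atTop (𝓝 ((c+δ)/((p:ℝ)+1) + 0 + 0)) :=
    (tendsto_const_nhds.add (tendsto_const_nhds.div_atTop hlogT)).add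
      (tendsto_const_nhds.div_atTop ((tendsto_pow_atTop (by omega : p+1 ≠ 0)).comp hlogT))
  have hLlim : Tendsto (fun n : ℕ =>
      (c-δ)*(1-η)*((1 - (Real.log (4*(K:ℝ)))^(p+1)/(Real.log n)^(p+1)) / ((p:ℝ)+1)))
      atTop (𝓝 ((c-δ)*(1-η)*((1 - 0) / ((p:ℝ)+1)))) := by
    apply tendsto_const_nhds.mul
    apply Tendsto.div_const
    exact tendsto_const_nhds.sub
      (tendsto_const_nhds.div_atTop ((tendsto_pow_atTop (by omega : p+1 ≠ 0)).comp hlogT))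
  have hub' : (c+δ)/((p:ℝ)+1) + 0 + 0 < c/((p:ℝ)+1) + ε₀ := by
    rw [add_zero, add_zero]
    have hid : (c+δ)/((p:ℝ)+1) = c/((p:ℝ)+1) + δ/((p:ℝ)+1) := by ring
    have hδd : δ/((p:ℝ)+1) ≤ ε₀/4 := by
      rw [div_le_iff₀ hp1]
      calc δ ≤ ((p:ℝ)+1)*ε₀/4 := hδε
        _ = ε₀/4*((p:ℝ)+1) := by ring
    rw [hid]
    linarith
  have hlb' : c/((p:ℝ)+1) - ε₀ < (c-δ)*(1-η)*((1 - 0) / ((p:ℝ)+1)) := by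
    have h2 : c*η ≤ ((p:ℝ)+1)*ε₀/8 := by
      have h2a := mul_le_mul_of_nonneg_left hηε (le_of_lt hc)
      calc c*η ≤ c*(((p:ℝ)+1)*ε₀/(8*c)) := h2a
        _ = ((p:ℝ)+1)*ε₀/8 := by field_simp
    have h6 : c - ε₀*((p:ℝ)+1) < (c-δ)*(1-η) := by nlinarith
    have h7 : c/((p:ℝ)+1) - ε₀ = (c - ε₀*((p:ℝ)+1))/((p:ℝ)+1) := by field_simp
    have h8 : (c-δ)*(1-η)*((1 - 0) / ((p:ℝ)+1)) = ((c-δ)*(1-η))/((p:ℝ)+1) := by ring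
    rw [h7, h8]
    exact div_lt_div_of_pos_right h6 hp1
  have e1 := hU.eventually_lt_const hub'
  have e2 := hLlim.eventually_const_lt hlb'
  filter_upwards [e1, e2, eventually_ge_atTop 3, eventually_ge_atTop (4*K)]
    with n h1 h2 h3 h4
  have hu := hEU n h3
  have hl := hEL n h4
  rw [Real.dist_eq, abs_sub_lt_iff]
  have hcast : ((p+1 : ℕ):ℝ) = (p:ℝ)+1 := by push_cast; ring
  rw [hcast]
  constructor <;> linarith


lemma tendsto_N (d : ℕ) (hd : 1 ≤ d) :
    Tendsto (fun n : ℕ => (N d n : ℝ) / (n * (Real.log n)^(d-1))) atTop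
      (𝓝 (2^d / ((d-1).factorial : ℝ))) := by
  induction d, hd using Nat.le_induction with
  | base =>
    have he : ∀ᶠ n : ℕ in atTop, (2:ℝ) - 1/(n:ℝ) = (N 1 n : ℝ) / ((n:ℝ) * (Real.log n)^(1-1)) := by
      filter_upwards [eventually_ge_atTop 1] with n hn
      have hn0 : (0:ℝ) < (n:ℝ) := by exact_mod_cast hn
      rw [N_one hn]
      have : ((2*n - 1 : ℕ) : ℝ) = 2*(n:ℝ) - 1 := by
        have : 1 ≤ 2*n := by omega
        push_cast [this]
        ring
      rw [this]
      simp only [Nat.sub_self, pow_zero, mul_one]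
      field_simp
    have ht : Tendsto (fun n : ℕ => (2:ℝ) - 1/(n:ℝ)) atTop (𝓝 (2 - 0)) :=
      tendsto_const_nhds.sub (tendsto_const_nhds.div_atTop tendsto_natCast_atTop_atTop)
    have h2 : (2:ℝ)^1 / (((1-1).factorial : ℕ) : ℝ) = 2 - 0 := by norm_num [Nat.factorial]
    rw [h2]
    exact ht.congr' he
  | succ e he ih =>
    have hfpos : (0:ℝ) < ((e-1).factorial : ℝ) := by
      exact_mod_cast Nat.factorial_pos _
    have hc : (0:ℝ) < 2^e / ((e-1).factorial : ℝ) := by positivity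
    have hS := tendsto_S_main e he _ hc ih
    have hlogT : Tendsto (fun n : ℕ => Real.log n) atTop atTop :=
      Real.tendsto_log_atTop.comp tendsto_natCast_atTop_atTop
    have hT : Tendsto (fun n : ℕ =>
        2*((S e n : ℝ)/((n:ℝ)*(Real.log n)^e))
          - ((N e n : ℝ)/((n:ℝ)*(Real.log n)^(e-1)))*(1/Real.log n)) atTop
        (𝓝 (2*((2^e / ((e-1).factorial : ℝ))/e) - (2^e / ((e-1).factorial : ℝ))*0)) :=
      ((hS.const_mul 2)).sub (ih.mul (tendsto_const_nhds.div_atTop hlogT))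
    have heq : ∀ᶠ n : ℕ in atTop,
        2*((S e n : ℝ)/((n:ℝ)*(Real.log n)^e))
          - ((N e n : ℝ)/((n:ℝ)*(Real.log n)^(e-1)))*(1/Real.log n)
        = (N (e+1) n : ℝ) / ((n:ℝ) * (Real.log n)^(e+1-1)) := by
      filter_upwards [eventually_ge_atTop 2] with n hn
      have hn1 : (1:ℝ) < (n:ℝ) := by exact_mod_cast (by omega : 1 < n)
      have hlogn : 0 < Real.log n := Real.log_pos hn1
      have hLne : Real.log (n:ℝ) ≠ 0 := ne_of_gt hlogn
      have hnne : (n:ℝ) ≠ 0 := by positivity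
      have hNval : (N (e+1) n : ℝ) = 2*(S e n : ℝ) - (N e n : ℝ) := by
        have := N_succ_S e n
        have h2 : ((N (e+1) n : ℕ) : ℝ) + (N e n : ℝ) = 2*(S e n : ℝ) := by
          exact_mod_cast congrArg (Nat.cast : ℕ → ℝ) this
        linarith
      have hpe : (Real.log (n:ℝ))^e = (Real.log n)^(e-1)*Real.log n := by
        rw [← pow_succ]
        congr 1
        omega
      rw [Nat.add_sub_cancel, hNval, hpe]
      field_simp
    have hres := hT.congr' heq
    have hval : 2*((2^e / ((e-1).factorial : ℝ))/e) - (2^e / ((e-1).factorial : ℝ))*0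
        = 2^(e+1) / ((e+1-1).factorial : ℝ) := by
      rw [Nat.add_sub_cancel, mul_zero, sub_zero]
      have hfe : ((e:ℝ)) * ((e-1).factorial : ℝ) = (e.factorial : ℝ) := by
        exact_mod_cast Nat.mul_factorial_pred (by omega : e ≠ 0)
      have hene : (e:ℝ) ≠ 0 := by
        have : (0:ℝ) < (e:ℝ) := by exact_mod_cast he
        positivity
      field_simp
      rw [← hfe]
      ring
    rwa [hval] at hres

lemma tendsto_log_floor_div_log : Tendsto (fun x : ℝ => Real.log (⌊x⌋₊:ℝ) / Real.log x)
    atTop (𝓝 1) := by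
  have hlogT : Tendsto (fun x : ℝ => Real.log x) atTop atTop := Real.tendsto_log_atTop
  have hlow : Tendsto (fun x : ℝ => 1 - Real.log 2 / Real.log x) atTop (𝓝 (1 - 0)) :=
    tendsto_const_nhds.sub (tendsto_const_nhds.div_atTop hlogT)
  have h1 : ∀ᶠ x : ℝ in atTop, 1 - Real.log 2 / Real.log x ≤ Real.log (⌊x⌋₊:ℝ) / Real.log x := by
    filter_upwards [eventually_ge_atTop (2:ℝ)] with x hx
    have hx0 : (0:ℝ) < x := by linarith
    have hlogx : 0 < Real.log x := Real.log_pos (by linarith)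
    have hfl : x/2 ≤ (⌊x⌋₊:ℝ) := by
      have := Nat.sub_one_lt_floor x
      linarith
    have hflpos : (0:ℝ) < x/2 := by linarith
    have hlog : Real.log (x/2) ≤ Real.log (⌊x⌋₊:ℝ) := Real.log_le_log hflpos hfl
    rw [Real.log_div (by linarith) (by norm_num)] at hlog
    rw [le_div_iff₀ hlogx]
    have hexp : (1 - Real.log 2 / Real.log x) * Real.log x = Real.log x - Real.log 2 := by
      field_simp
    rw [hexp]
    linarith
  have h2 : ∀ᶠ x : ℝ in atTop, Real.log (⌊x⌋₊:ℝ) / Real.log x ≤ 1 := by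
    filter_upwards [eventually_ge_atTop (2:ℝ)] with x hx
    have hlogx : 0 < Real.log x := Real.log_pos (by linarith)
    rw [div_le_one hlogx]
    rcases Nat.eq_zero_or_pos ⌊x⌋₊ with h0 | hpos
    · rw [h0]
      simp only [Nat.cast_zero, Real.log_zero]
      linarith
    · have : (0:ℝ) < (⌊x⌋₊:ℝ) := by exact_mod_cast hpos
      exact Real.log_le_log this (Nat.floor_le (by linarith))
  have := tendsto_of_tendsto_of_tendsto_of_le_of_le' (by simpa using hlow) tendsto_const_nhds h1 h2
  exact this

lemma tendsto_N_real (d : ℕ) (hd : 1 ≤ d) :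
    Tendsto (fun x : ℝ => (N d ⌊x⌋₊ : ℝ) / (x * (Real.log x)^(d-1))) atTop
      (𝓝 (2^d / ((d-1).factorial : ℝ))) := by
  have hfloor : Tendsto (fun x : ℝ => ⌊x⌋₊) atTop atTop := tendsto_nat_floor_atTop
  have t1 : Tendsto (fun x : ℝ => (N d ⌊x⌋₊ : ℝ)/((⌊x⌋₊:ℝ) * (Real.log (⌊x⌋₊:ℝ))^(d-1)))
      atTop (𝓝 (2^d / ((d-1).factorial : ℝ))) := (tendsto_N d hd).comp hfloor
  have t2 : Tendsto (fun x : ℝ => (⌊x⌋₊:ℝ)/x) atTop (𝓝 1) := tendsto_nat_floor_div_atTop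
  have t3 := tendsto_log_floor_div_log
  have hT := (t1.mul t2).mul (t3.pow (d-1))
  have heq : ∀ᶠ x : ℝ in atTop,
      ((N d ⌊x⌋₊ : ℝ)/((⌊x⌋₊:ℝ) * (Real.log (⌊x⌋₊:ℝ))^(d-1))) * ((⌊x⌋₊:ℝ)/x)
        * (Real.log (⌊x⌋₊:ℝ) / Real.log x)^(d-1)
      = (N d ⌊x⌋₊ : ℝ) / (x * (Real.log x)^(d-1)) := by
    filter_upwards [eventually_ge_atTop (2:ℝ)] with x hx
    have hx0 : (0:ℝ) < x := by linarith
    have hlogx : 0 < Real.log x := Real.log_pos (by linarith)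
    have hfl2 : 2 ≤ ⌊x⌋₊ := Nat.le_floor (by exact_mod_cast hx)
    have hflR : (2:ℝ) ≤ (⌊x⌋₊:ℝ) := by exact_mod_cast hfl2
    have hlogfl : 0 < Real.log (⌊x⌋₊:ℝ) := Real.log_pos (by linarith)
    rw [div_pow]
    field_simp
  have hres := hT.congr' heq
  simpa using hres

lemma tendsto_one_div : Tendsto (fun ε : ℝ => 1/ε) (𝓝[>] (0:ℝ)) atTop := by
  simpa [one_div] using tendsto_inv_nhdsGT_zero

lemma tendsto_one_div_mul (a : ℝ) (ha : 0 < a) :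
    Tendsto (fun ε : ℝ => 1/(a*ε)) (𝓝[>] (0:ℝ)) atTop := by
  have h1 : Tendsto (fun ε : ℝ => (1/a) * (1/ε)) (𝓝[>] (0:ℝ)) atTop :=
    tendsto_one_div.const_mul_atTop (by positivity)
  refine h1.congr fun ε => ?_
  rw [div_mul_div_comm]
  norm_num

lemma log_ratio (a : ℝ) (ha : 0 < a) :
    Tendsto (fun ε : ℝ => Real.log (1/(a*ε)) / Real.log (1/ε)) (𝓝[>] (0:ℝ)) (𝓝 1) := by
  have hlogv : Tendsto (fun ε : ℝ => Real.log (1/ε)) (𝓝[>] (0:ℝ)) atTop :=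
    Real.tendsto_log_atTop.comp tendsto_one_div
  have t : Tendsto (fun ε : ℝ => 1 - Real.log a / Real.log (1/ε)) (𝓝[>] (0:ℝ)) (𝓝 (1-0)) :=
    tendsto_const_nhds.sub (tendsto_const_nhds.div_atTop hlogv)
  have heq : ∀ᶠ ε : ℝ in 𝓝[>] (0:ℝ),
      1 - Real.log a / Real.log (1/ε) = Real.log (1/(a*ε)) / Real.log (1/ε) := by
    filter_upwards [Ioo_mem_nhdsGT_of_mem (Set.mem_Ico.2 ⟨le_rfl, (by norm_num : (0:ℝ) < 1/2)⟩)]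
      with ε hε
    obtain ⟨hε0, hε2⟩ := hε
    have h1ε : (2:ℝ) < 1/ε := by
      rw [lt_div_iff₀ hε0]; linarith
    have hlogpos : 0 < Real.log (1/ε) := Real.log_pos (by linarith)
    have hlogeq : Real.log (1/(a*ε)) = Real.log (1/ε) - Real.log a := by
      rw [one_div, one_div, Real.log_inv, Real.log_inv, Real.log_mul (ne_of_gt ha) (ne_of_gt hε0)]
      ring
    rw [hlogeq]
    field_simp
  have := t.congr' heq
  simpa using this

lemma tendsto_G_atTop (d : ℕ) (hd : 1 ≤ d) :
    Tendsto (fun ε : ℝ => (N d ⌊1/ε⌋₊ : ℝ)) (𝓝[>] (0:ℝ)) atTop := by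
  have hA : Tendsto (fun ε : ℝ => (N d ⌊1/ε⌋₊:ℝ)/((1/ε)*(Real.log (1/ε))^(d-1)))
      (𝓝[>] (0:ℝ)) (𝓝 (2^d / ((d-1).factorial : ℝ))) :=
    (tendsto_N_real d hd).comp tendsto_one_div
  have hden : Tendsto (fun ε : ℝ => (1/ε)*(Real.log (1/ε))^(d-1)) (𝓝[>] (0:ℝ)) atTop := by
    rcases Nat.eq_zero_or_pos (d-1) with h0 | hpos
    · simpa [h0] using tendsto_one_div
    · exact tendsto_one_div.atTop_mul_atTop₀
        ((tendsto_pow_atTop (by omega : d-1 ≠ 0)).comp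
          (Real.tendsto_log_atTop.comp tendsto_one_div))
  have hfpos : (0:ℝ) < ((d-1).factorial : ℝ) := by exact_mod_cast Nat.factorial_pos _
  have hc : (0:ℝ) < 2^d / ((d-1).factorial : ℝ) := by positivity
  have := hA.pos_mul_atTop hc hden
  refine this.congr' ?_
  filter_upwards [Ioo_mem_nhdsGT_of_mem (Set.mem_Ico.2 ⟨le_rfl, (by norm_num : (0:ℝ) < 1/2)⟩)]
    with ε hε
  obtain ⟨hε0, hε2⟩ := hε
  have h1ε : (2:ℝ) < 1/ε := by rw [lt_div_iff₀ hε0]; linarith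
  have hlogpos : 0 < Real.log (1/ε) := Real.log_pos (by linarith)
  have hne : (1/ε)*(Real.log (1/ε))^(d-1) ≠ 0 := by positivity
  field_simp

lemma ratio_R1 (d : ℕ) (hd : 1 ≤ d) (lam : ℝ) (hlam : 0 < lam) :
    Tendsto (fun ε : ℝ => (N d ⌊1/(lam*ε)⌋₊ : ℝ) / (N d ⌊1/ε⌋₊ : ℝ))
      (𝓝[>] (0:ℝ)) (𝓝 (1/lam)) := by
  set c : ℝ := 2^d / ((d-1).factorial : ℝ) with hcdef
  have hfpos : (0:ℝ) < ((d-1).factorial : ℝ) := by exact_mod_cast Nat.factorial_pos _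
  have hc : (0:ℝ) < c := by rw [hcdef]; positivity
  have hA : Tendsto (fun ε : ℝ => (N d ⌊1/ε⌋₊:ℝ)/((1/ε)*(Real.log (1/ε))^(d-1)))
      (𝓝[>] (0:ℝ)) (𝓝 c) := (tendsto_N_real d hd).comp tendsto_one_div
  have hB : Tendsto (fun ε : ℝ => (N d ⌊1/(lam*ε)⌋₊:ℝ)/((1/(lam*ε))*(Real.log (1/(lam*ε)))^(d-1)))
      (𝓝[>] (0:ℝ)) (𝓝 c) := (tendsto_N_real d hd).comp (tendsto_one_div_mul lam hlam)
  have hrat := log_ratio lam hlam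
  have hT := ((hB.div hA (ne_of_gt hc)).mul
    ((tendsto_const_nhds (x := 1/lam)).mul (hrat.pow (d-1))))
  have hcc : c / c * (1 / lam * (1:ℝ) ^ (d - 1)) = 1/lam := by
    rw [div_self (ne_of_gt hc), one_pow]
    ring
  rw [← hcc]
  refine Tendsto.congr' ?_ hT
  filter_upwards [Ioo_mem_nhdsGT_of_mem
    (Set.mem_Ico.2 ⟨le_rfl, (by positivity : (0:ℝ) < min (1/2) (1/(2*lam)))⟩)] with ε hε
  obtain ⟨hε0, hεlt⟩ := hε
  have hε2 : ε < 1/2 := lt_of_lt_of_le hεlt (min_le_left _ _)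
  have hεlam : ε < 1/(2*lam) := lt_of_lt_of_le hεlt (min_le_right _ _)
  have h1ε : (2:ℝ) < 1/ε := by rw [lt_div_iff₀ hε0]; linarith
  have h1εlam : (2:ℝ) < 1/(lam*ε) := by
    rw [lt_div_iff₀ (by positivity : (0:ℝ) < lam*ε)]
    have ha := mul_lt_mul_of_pos_left hεlam hlam
    have hb : lam*(1/(2*lam)) = 1/2 := by field_simp
    rw [hb] at ha
    linarith
  have hlogv : 0 < Real.log (1/ε) := Real.log_pos (by linarith)
  have hlogu : 0 < Real.log (1/(lam*ε)) := Real.log_pos (by linarith)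
  have hone : (1:ℝ) ≤ 1/ε := by rw [le_div_iff₀ hε0]; linarith
  have h1fl : 1 ≤ ⌊(1:ℝ)/ε⌋₊ := Nat.le_floor (by exact_mod_cast hone)
  have hGε : (0:ℝ) < (N d ⌊(1:ℝ)/ε⌋₊ : ℝ) := by exact_mod_cast N_pos d h1fl
  have hGne : (N d ⌊(1:ℝ)/ε⌋₊ : ℝ) ≠ 0 := ne_of_gt hGε
  have hLune : Real.log (1/(lam*ε)) ≠ 0 := ne_of_gt hlogu
  have hLvne : Real.log (1/ε) ≠ 0 := ne_of_gt hlogv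
  have hεne : ε ≠ 0 := ne_of_gt hε0
  have hlamne : lam ≠ 0 := ne_of_gt hlam
  simp only [Pi.div_apply]
  rw [div_pow]
  field_simp

lemma ratio_R2 (d : ℕ) (hd : 1 ≤ d) (cc : ℝ) (hcc : 0 < cc) :
    Tendsto (fun ε : ℝ => (N (d-1) ⌊1/(cc*ε)⌋₊ : ℝ) / (N d ⌊1/ε⌋₊ : ℝ))
      (𝓝[>] (0:ℝ)) (𝓝 0) := by
  obtain ⟨e, rfl⟩ : ∃ e, d = e+1 := ⟨d-1, by omega⟩
  simp only [Nat.add_sub_cancel]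
  rcases Nat.eq_zero_or_pos e with rfl | he
  · have hG := tendsto_G_atTop 1 le_rfl
    have h0 := hG.inv_tendsto_atTop
    refine Filter.Tendsto.congr' ?_ h0
    filter_upwards [Ioo_mem_nhdsGT_of_mem
      (Set.mem_Ico.2 ⟨le_rfl, (by positivity : (0:ℝ) < min (1/2) (1/(2*cc)))⟩)] with ε hε
    obtain ⟨hε0, hεlt⟩ := hε
    have hεcc : ε < 1/(2*cc) := lt_of_lt_of_le hεlt (min_le_right _ _)
    have h1 : (1:ℝ) ≤ 1/(cc*ε) := by
      rw [le_div_iff₀ (by positivity : (0:ℝ) < cc*ε)]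
      have ha := mul_lt_mul_of_pos_left hεcc hcc
      have hb : cc*(1/(2*cc)) = 1/2 := by field_simp
      rw [hb] at ha
      linarith
    have h1fl : 1 ≤ ⌊(1:ℝ)/(cc*ε)⌋₊ := Nat.le_floor (by exact_mod_cast h1)
    rw [Pi.inv_apply, N_zero_dim h1fl]
    rw [Nat.cast_one, inv_eq_one_div]
  · obtain ⟨f, rfl⟩ : ∃ f, e = f+1 := ⟨e-1, by omega⟩
    set cd : ℝ := 2^(f+1+1) / (((f+1+1)-1).factorial : ℝ) with hcddef
    set ce : ℝ := 2^(f+1) / (((f+1)-1).factorial : ℝ) with hcedef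
    have hfpos : (0:ℝ) < (((f+1+1)-1).factorial : ℝ) := by exact_mod_cast Nat.factorial_pos _
    have hcd : (0:ℝ) < cd := by rw [hcddef]; positivity
    have hA : Tendsto (fun ε : ℝ => (N (f+1+1) ⌊1/ε⌋₊:ℝ)/((1/ε)*(Real.log (1/ε))^(f+1)))
        (𝓝[>] (0:ℝ)) (𝓝 cd) := by
      have h := (tendsto_N_real (f+1+1) (by omega)).comp tendsto_one_div
      simp only [Nat.add_sub_cancel] at h
      exact h
    have hBe : Tendsto (fun ε : ℝ => (N (f+1) ⌊1/(cc*ε)⌋₊:ℝ)/((1/(cc*ε))*(Real.log (1/(cc*ε)))^f))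
        (𝓝[>] (0:ℝ)) (𝓝 ce) := by
      have h := (tendsto_N_real (f+1) (by omega)).comp (tendsto_one_div_mul cc hcc)
      simp only [Nat.add_sub_cancel] at h
      exact h
    have hrat := log_ratio cc hcc
    have hlogv : Tendsto (fun ε : ℝ => Real.log (1/ε)) (𝓝[>] (0:ℝ)) atTop :=
      Real.tendsto_log_atTop.comp tendsto_one_div
    have hinv : Tendsto (fun ε : ℝ => 1/Real.log (1/ε)) (𝓝[>] (0:ℝ)) (𝓝 0) :=
      tendsto_const_nhds.div_atTop hlogv
    have hT := ((hBe.div hA (ne_of_gt hcd)).mul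
      ((tendsto_const_nhds (x := 1/cc)).mul ((hrat.pow f).mul hinv)))
    have hval : ce / cd * (1 / cc * ((1:ℝ) ^ f * 0)) = 0 := by ring
    rw [hval] at hT
    refine Tendsto.congr' ?_ hT
    filter_upwards [Ioo_mem_nhdsGT_of_mem
      (Set.mem_Ico.2 ⟨le_rfl, (by positivity : (0:ℝ) < min (1/2) (1/(2*cc)))⟩)] with ε hε
    obtain ⟨hε0, hεlt⟩ := hε
    have hε2 : ε < 1/2 := lt_of_lt_of_le hεlt (min_le_left _ _)
    have hεcc : ε < 1/(2*cc) := lt_of_lt_of_le hεlt (min_le_right _ _)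
    have h1ε : (2:ℝ) < 1/ε := by rw [lt_div_iff₀ hε0]; linarith
    have h1εcc : (2:ℝ) < 1/(cc*ε) := by
      rw [lt_div_iff₀ (by positivity : (0:ℝ) < cc*ε)]
      have ha := mul_lt_mul_of_pos_left hεcc hcc
      have hb : cc*(1/(2*cc)) = 1/2 := by field_simp
      rw [hb] at ha
      linarith
    have hlogvp : 0 < Real.log (1/ε) := Real.log_pos (by linarith)
    have hlogup : 0 < Real.log (1/(cc*ε)) := Real.log_pos (by linarith)
    have hone : (1:ℝ) ≤ 1/ε := by rw [le_div_iff₀ hε0]; linarith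
    have h1fl : 1 ≤ ⌊(1:ℝ)/ε⌋₊ := Nat.le_floor (by exact_mod_cast hone)
    have hGε : (0:ℝ) < (N (f+1+1) ⌊(1:ℝ)/ε⌋₊ : ℝ) := by exact_mod_cast N_pos (f+1+1) h1fl
    have hGne : (N (f+1+1) ⌊(1:ℝ)/ε⌋₊ : ℝ) ≠ 0 := ne_of_gt hGε
    have hLune : Real.log (1/(cc*ε)) ≠ 0 := ne_of_gt hlogup
    have hLvne : Real.log (1/ε) ≠ 0 := ne_of_gt hlogvp
    have hεne : ε ≠ 0 := ne_of_gt hε0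
    have hccne : cc ≠ 0 := ne_of_gt hcc
    simp only [Pi.div_apply]
    rw [div_pow]
    field_simp
    ring


lemma ncard_biUnion_le {β α : Type*} (t : Finset β) (s : β → Set α) :
    (⋃ i ∈ t, s i).ncard ≤ ∑ i ∈ t, (s i).ncard := by
  classical
  induction t using Finset.induction_on with
  | empty => simp
  | insert _ _ hx ih =>
    rw [Finset.set_biUnion_insert, Finset.sum_insert hx]
    exact le_trans (Set.ncard_union_le _ _) (add_le_add_right ih _)

section main

variable (a : ℤ → ℝ) (ha : ∀ ℓ : ℤ, a ℓ = 1 / (1 + |(ℓ : ℝ)|))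

include ha in
lemma apos : ∀ ℓ : ℤ, 0 < a ℓ := by
  intro ℓ
  rw [ha]
  positivity

include ha in
lemma ale1 : ∀ ℓ : ℤ, a ℓ ≤ 1 := by
  intro ℓ
  rw [ha, div_le_one (by positivity)]
  have := abs_nonneg ((ℓ:ℝ))
  linarith

include ha in
lemma setA_eq {d : ℕ} {ε : ℝ} (hε : 0 < ε) :
    {k : Fin d → ℤ | ε ≤ ∏ j, a (k j)} = ↑(Kt d ⌊1/ε⌋₊) := by
  ext k
  simp only [Set.mem_setOf_eq, Finset.mem_coe, mem_Kt]
  have hP : 0 < ∏ j, ((k j).natAbs + 1) := Finset.prod_pos fun i _ => Nat.succ_pos _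
  have hPR : (0:ℝ) < ((∏ j, ((k j).natAbs + 1) : ℕ) : ℝ) := by exact_mod_cast hP
  have hprod : ∏ j, a (k j) = ((∏ j, ((k j).natAbs + 1) : ℕ) : ℝ)⁻¹ := by
    rw [Nat.cast_prod, ← Finset.prod_inv_distrib]
    refine Finset.prod_congr rfl fun j _ => ?_
    rw [ha]
    push_cast [Nat.cast_natAbs]
    rw [one_div, add_comm]
  rw [hprod, Nat.le_floor_iff (by positivity : (0:ℝ) ≤ 1/ε)]
  constructor
  · intro h
    rw [le_div_iff₀ hε]
    have h2 := mul_le_mul_of_nonneg_right h (le_of_lt hPR)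
    rw [inv_mul_cancel₀ (ne_of_gt hPR)] at h2
    linarith [h2]
  · intro h
    rw [le_div_iff₀ hε] at h
    rw [le_inv_comm₀ hε hPR, ← one_div, le_div_iff₀ hε]
    linarith [h]

include ha in
lemma setA_ncard {d : ℕ} {ε : ℝ} (hε : 0 < ε) :
    {k : Fin d → ℤ | ε ≤ ∏ j, a (k j)}.ncard = N d ⌊1/ε⌋₊ := by
  rw [setA_eq a ha hε, Set.ncard_coe_finset]
  rfl

include ha in
lemma setA_fin {d : ℕ} {ε : ℝ} (hε : 0 < ε) :
    {k : Fin d → ℤ | ε ≤ ∏ j, a (k j)}.Finite := by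
  rw [setA_eq a ha hε]
  exact (Kt d ⌊1/ε⌋₊).finite_toSet

variable (b : ℤ → ℝ) (hbpos : ∀ ℓ : ℤ, 0 < b ℓ) (hb1 : ∀ ℓ : ℤ, b ℓ ≤ 1)
variable (C : ℝ) (hC1 : 1 ≤ C) (hCb : ∀ ℓ : ℤ, b ℓ ≤ C * a ℓ)

include ha hbpos hb1 hC1 hCb in
lemma setB_sub_setA {d : ℕ} {ε : ℝ} :
    {k : Fin d → ℤ | ε ≤ ∏ j, b (k j)} ⊆ {k : Fin d → ℤ | (C^d)⁻¹ * ε ≤ ∏ j, a (k j)} := by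
  intro k hk
  simp only [Set.mem_setOf_eq] at hk ⊢
  have hCpos : (0:ℝ) < C := lt_of_lt_of_le one_pos hC1
  have h1 : ∏ j, (b (k j) / C) ≤ ∏ j, a (k j) := by
    refine Finset.prod_le_prod (fun j _ => by have := hbpos (k j); positivity) (fun j _ => ?_)
    rw [div_le_iff₀ hCpos, mul_comm]
    exact hCb (k j)
  have h2 : ∏ j, (b (k j) / C) = (∏ j, b (k j)) / C^d := by
    rw [Finset.prod_div_distrib, Finset.prod_const, Finset.card_univ, Fintype.card_fin]
  rw [h2] at h1
  have h3 : (C^d)⁻¹ * ε ≤ (∏ j, b (k j)) / C^d := by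
    rw [div_eq_inv_mul]
    exact mul_le_mul_of_nonneg_left hk (by positivity)
  linarith

include ha hbpos hb1 hC1 hCb in
lemma setB_fin {d : ℕ} {ε : ℝ} (hε : 0 < ε) :
    {k : Fin d → ℤ | ε ≤ ∏ j, b (k j)}.Finite := by
  have hCpos : (0:ℝ) < C := lt_of_lt_of_le one_pos hC1
  exact Set.Finite.subset (setA_fin a ha (by positivity : (0:ℝ) < (C^d)⁻¹ * ε))
    (setB_sub_setA a ha b hbpos hb1 C hC1 hCb)

include ha hbpos hb1 hC1 hCb in
lemma key_upper (e : ℕ) (δ : ℝ) (hδ0 : 0 < δ) (hδ1 : δ < 1)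
    (F : Set ℤ) (hF : F.Finite) (hFa : ∀ ℓ ∉ F, (1-δ) * b ℓ ≤ a ℓ)
    {ε : ℝ} (hε : 0 < ε) :
    {k : Fin (e+1) → ℤ | ε ≤ ∏ j, b (k j)}.ncard
      ≤ N (e+1) ⌊1/((1-δ)^(e+1)*ε)⌋₊
        + (e+1) * (hF.toFinset.card * N e ⌊1/((C^e)⁻¹*ε)⌋₊) := by
  classical
  have hCpos : (0:ℝ) < C := lt_of_lt_of_le one_pos hC1
  set Sb := {k : Fin (e+1) → ℤ | ε ≤ ∏ j, b (k j)} with hSbdef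
  have hSbFin : Sb.Finite := setB_fin a ha b hbpos hb1 C hC1 hCb hε
  set Good := {k ∈ Sb | ∀ j, k j ∉ F} with hGooddef
  set T : Fin (e+1) → Set (Fin (e+1) → ℤ) := fun j => {k ∈ Sb | k j ∈ F} with hTdef
  have hcover : Sb ⊆ Good ∪ ⋃ j ∈ Finset.univ, T j := by
    intro k hk
    by_cases hall : ∀ j, k j ∉ F
    · exact Set.mem_union_left _ ⟨hk, hall⟩
    · push_neg at hall
      obtain ⟨j, hj⟩ := hall
      exact Set.mem_union_right _ (Set.mem_biUnion (Finset.mem_univ j) ⟨hk, hj⟩)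
  have hGoodsub : Good ⊆ {k : Fin (e+1) → ℤ | (1-δ)^(e+1)*ε ≤ ∏ j, a (k j)} := by
    rintro k ⟨hk, hall⟩
    simp only [Set.mem_setOf_eq] at hk ⊢
    have h1 : ∏ j, ((1-δ) * b (k j)) ≤ ∏ j, a (k j) := by
      refine Finset.prod_le_prod (fun j _ => ?_) (fun j _ => hFa (k j) (hall j))
      have := hbpos (k j)
      nlinarith
    have h2 : ∏ j, ((1-δ) * b (k j)) = (1-δ)^(e+1) * ∏ j, b (k j) := by
      rw [Finset.prod_mul_distrib, Finset.prod_const, Finset.card_univ, Fintype.card_fin]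
    rw [h2] at h1
    have h1δ : (0:ℝ) ≤ 1-δ := by linarith
    have h3 : (1-δ)^(e+1)*ε ≤ (1-δ)^(e+1) * ∏ j, b (k j) :=
      mul_le_mul_of_nonneg_left hk (pow_nonneg h1δ _)
    linarith
  have hεC : (0:ℝ) < (C^e)⁻¹*ε := by positivity
  have hTbound : ∀ j, (T j).ncard ≤ hF.toFinset.card * N e ⌊1/((C^e)⁻¹*ε)⌋₊ := by
    intro j
    have hmap : ∀ k ∈ T j, (k j, j.removeNth k)
        ∈ (↑(hF.toFinset ×ˢ Kt e ⌊1/((C^e)⁻¹*ε)⌋₊) : Set (ℤ × (Fin e → ℤ))) := by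
      intro k hk
      obtain ⟨hkS, hkF⟩ := hk
      simp only [Finset.coe_product, Set.mem_prod, Finset.mem_coe]
      refine ⟨hF.mem_toFinset.2 hkF, ?_⟩
      have hkS' : ε ≤ ∏ j', b (k j') := hkS
      have hsplit : ∏ j', b (k j') = b (k j) * ∏ i, b (k (j.succAbove i)) :=
        Fin.prod_univ_succAbove _ j
      have hpos : (0:ℝ) < ∏ i, b (k (j.succAbove i)) :=
        Finset.prod_pos fun i _ => hbpos _
      have h4 : ε ≤ ∏ i, b (k (j.succAbove i)) := by
        have h5 := mul_le_of_le_one_left (le_of_lt hpos) (hb1 (k j))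
        rw [hsplit] at hkS'
        linarith
      have h5 : ∏ i, (b (k (j.succAbove i)) / C) ≤ ∏ i, a (k (j.succAbove i)) := by
        refine Finset.prod_le_prod (fun i _ => by have := hbpos (k (j.succAbove i)); positivity)
          (fun i _ => ?_)
        rw [div_le_iff₀ hCpos, mul_comm]
        exact hCb _
      have h6 : ∏ i, (b (k (j.succAbove i)) / C) = (∏ i, b (k (j.succAbove i))) / C^e := by
        rw [Finset.prod_div_distrib, Finset.prod_const, Finset.card_univ, Fintype.card_fin]
      rw [h6] at h5
      have h7 : (C^e)⁻¹*ε ≤ ∏ i, a (k (j.succAbove i)) := by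
        have h8 : (C^e)⁻¹*ε ≤ (∏ i, b (k (j.succAbove i))) / C^e := by
          rw [div_eq_inv_mul]
          exact mul_le_mul_of_nonneg_left h4 (by positivity)
        linarith
      have hmem : j.removeNth k ∈ {v : Fin e → ℤ | (C^e)⁻¹*ε ≤ ∏ i, a (v i)} := h7
      rw [setA_eq a ha hεC] at hmem
      exact hmem
    have hinj : Set.InjOn (fun k => (k j, j.removeNth k)) (T j) := by
      intro k _ k' _ heq
      simp only [Prod.mk.injEq] at heq
      calc k = j.insertNth (k j) (j.removeNth k) := (Fin.insertNth_self_removeNth j k).symm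
        _ = j.insertNth (k' j) (j.removeNth k') := by rw [heq.1, heq.2]
        _ = k' := Fin.insertNth_self_removeNth j k'
    have hcard := Set.ncard_le_ncard_of_injOn _ hmap hinj (Finset.finite_toSet _)
    rwa [Set.ncard_coe_finset, Finset.card_product] at hcard
  have hUnionSub : (Good ∪ ⋃ j ∈ Finset.univ, T j) ⊆ Sb :=
    Set.union_subset (fun k hk => hk.1) (Set.iUnion₂_subset fun j _ k hk => hk.1)
  have h1 : Sb.ncard ≤ (Good ∪ ⋃ j ∈ Finset.univ, T j).ncard :=
    Set.ncard_le_ncard hcover (hSbFin.subset hUnionSub)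
  have hGoodcard : Good.ncard ≤ N (e+1) ⌊1/((1-δ)^(e+1)*ε)⌋₊ := by
    have hpos : (0:ℝ) < (1-δ)^(e+1)*ε := by
      have : (0:ℝ) < 1 - δ := by linarith
      positivity
    calc Good.ncard ≤ {k : Fin (e+1) → ℤ | (1-δ)^(e+1)*ε ≤ ∏ j, a (k j)}.ncard :=
          Set.ncard_le_ncard hGoodsub (setA_fin a ha hpos)
      _ = N (e+1) ⌊1/((1-δ)^(e+1)*ε)⌋₊ := setA_ncard a ha hpos
  calc Sb.ncard ≤ (Good ∪ ⋃ j ∈ Finset.univ, T j).ncard := h1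
    _ ≤ Good.ncard + (⋃ j ∈ Finset.univ, T j).ncard := Set.ncard_union_le _ _
    _ ≤ Good.ncard + ∑ j ∈ Finset.univ, (T j).ncard :=
        add_le_add_right (ncard_biUnion_le _ _) _
    _ ≤ N (e+1) ⌊1/((1-δ)^(e+1)*ε)⌋₊
        + ∑ _j ∈ (Finset.univ : Finset (Fin (e+1))), hF.toFinset.card * N e ⌊1/((C^e)⁻¹*ε)⌋₊ :=
        add_le_add hGoodcard (Finset.sum_le_sum fun j _ => hTbound j)
    _ = N (e+1) ⌊1/((1-δ)^(e+1)*ε)⌋₊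
        + (e+1) * (hF.toFinset.card * N e ⌊1/((C^e)⁻¹*ε)⌋₊) := by
        rw [Finset.sum_const, Finset.card_univ, Fintype.card_fin, smul_eq_mul]

include ha hbpos hb1 hC1 hCb in
lemma key_lower (e : ℕ) (δ : ℝ) (hδ0 : 0 < δ)
    (F : Set ℤ) (hF : F.Finite) (hFb : ∀ ℓ ∉ F, a ℓ ≤ (1+δ) * b ℓ)
    {ε : ℝ} (hε : 0 < ε) :
    N (e+1) ⌊1/((1+δ)^(e+1)*ε)⌋₊
      ≤ {k : Fin (e+1) → ℤ | ε ≤ ∏ j, b (k j)}.ncard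
        + (e+1) * (hF.toFinset.card * N e ⌊1/ε⌋₊) := by
  classical
  have hδ1pos : (0:ℝ) < 1 + δ := by linarith
  have hεA : (0:ℝ) < (1+δ)^(e+1)*ε := by positivity
  set SA := {k : Fin (e+1) → ℤ | (1+δ)^(e+1)*ε ≤ ∏ j, a (k j)} with hSAdef
  have hSAFin : SA.Finite := setA_fin a ha hεA
  set Sb := {k : Fin (e+1) → ℤ | ε ≤ ∏ j, b (k j)} with hSbdef
  set T : Fin (e+1) → Set (Fin (e+1) → ℤ) := fun j => {k ∈ SA | k j ∈ F} with hTdef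
  have hcover : SA ⊆ Sb ∪ ⋃ j ∈ Finset.univ, T j := by
    intro k hk
    by_cases hall : ∀ j, k j ∉ F
    · refine Set.mem_union_left _ ?_
      have hk' : (1+δ)^(e+1)*ε ≤ ∏ j, a (k j) := hk
      have h1 : ∏ j, a (k j) ≤ ∏ j, ((1+δ) * b (k j)) := by
        refine Finset.prod_le_prod (fun j _ => le_of_lt (apos a ha (k j))) (fun j _ => ?_)
        exact hFb (k j) (hall j)
      have h2 : ∏ j, ((1+δ) * b (k j)) = (1+δ)^(e+1) * ∏ j, b (k j) := by
        rw [Finset.prod_mul_distrib, Finset.prod_const, Finset.card_univ, Fintype.card_fin]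
      rw [h2] at h1
      have h3 : (1+δ)^(e+1)*ε ≤ (1+δ)^(e+1) * ∏ j, b (k j) := le_trans hk' h1
      have h4 : ε ≤ ∏ j, b (k j) := by
        have hpow : (0:ℝ) < (1+δ)^(e+1) := by positivity
        exact le_of_mul_le_mul_left (by linarith [h3]) hpow
      exact h4
    · push_neg at hall
      obtain ⟨j, hj⟩ := hall
      exact Set.mem_union_right _ (Set.mem_biUnion (Finset.mem_univ j) ⟨hk, hj⟩)
  have hTbound : ∀ j, (T j).ncard ≤ hF.toFinset.card * N e ⌊1/ε⌋₊ := by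
    intro j
    have hmap : ∀ k ∈ T j, (k j, j.removeNth k)
        ∈ (↑(hF.toFinset ×ˢ Kt e ⌊1/ε⌋₊) : Set (ℤ × (Fin e → ℤ))) := by
      intro k hk
      obtain ⟨hkS, hkF⟩ := hk
      simp only [Finset.coe_product, Set.mem_prod, Finset.mem_coe]
      refine ⟨hF.mem_toFinset.2 hkF, ?_⟩
      have hkS' : (1+δ)^(e+1)*ε ≤ ∏ j', a (k j') := hkS
      have hsplit : ∏ j', a (k j') = a (k j) * ∏ i, a (k (j.succAbove i)) :=
        Fin.prod_univ_succAbove _ j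
      have hpos : (0:ℝ) < ∏ i, a (k (j.succAbove i)) :=
        Finset.prod_pos fun i _ => apos a ha _
      have h4 : ε ≤ ∏ i, a (k (j.succAbove i)) := by
        have h5 := mul_le_of_le_one_left (le_of_lt hpos) (ale1 a ha (k j))
        rw [hsplit] at hkS'
        have h6 : ε ≤ (1+δ)^(e+1)*ε := by
          have h7 : (1:ℝ) ≤ (1+δ)^(e+1) := one_le_pow₀ (by linarith)
          nlinarith
        linarith
      have hmem : j.removeNth k ∈ {v : Fin e → ℤ | ε ≤ ∏ i, a (v i)} := h4
      rw [setA_eq a ha hε] at hmem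
      exact hmem
    have hinj : Set.InjOn (fun k => (k j, j.removeNth k)) (T j) := by
      intro k _ k' _ heq
      simp only [Prod.mk.injEq] at heq
      calc k = j.insertNth (k j) (j.removeNth k) := (Fin.insertNth_self_removeNth j k).symm
        _ = j.insertNth (k' j) (j.removeNth k') := by rw [heq.1, heq.2]
        _ = k' := Fin.insertNth_self_removeNth j k'
    have hcard := Set.ncard_le_ncard_of_injOn _ hmap hinj (Finset.finite_toSet _)
    rwa [Set.ncard_coe_finset, Finset.card_product] at hcard
  have hUfin : (⋃ j ∈ Finset.univ, T j).Finite :=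
    hSAFin.subset (Set.iUnion₂_subset fun j _ k hk => hk.1)
  have hSbFin2 : Sb.Finite := setB_fin a ha b hbpos hb1 C hC1 hCb hε
  have h1 : SA.ncard ≤ (Sb ∪ ⋃ j ∈ Finset.univ, T j).ncard :=
    Set.ncard_le_ncard hcover (hSbFin2.union hUfin)
  have hSAcard : SA.ncard = N (e+1) ⌊1/((1+δ)^(e+1)*ε)⌋₊ := setA_ncard a ha hεA
  calc N (e+1) ⌊1/((1+δ)^(e+1)*ε)⌋₊ = SA.ncard := hSAcard.symm
    _ ≤ (Sb ∪ ⋃ j ∈ Finset.univ, T j).ncard := h1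
    _ ≤ Sb.ncard + (⋃ j ∈ Finset.univ, T j).ncard := Set.ncard_union_le _ _
    _ ≤ Sb.ncard + ∑ j ∈ Finset.univ, (T j).ncard :=
        add_le_add_right (ncard_biUnion_le _ _) _
    _ ≤ Sb.ncard + ∑ _j ∈ (Finset.univ : Finset (Fin (e+1))), hF.toFinset.card * N e ⌊1/ε⌋₊ :=
        add_le_add_right (Finset.sum_le_sum fun j _ => hTbound j) _
    _ = Sb.ncard + (e+1) * (hF.toFinset.card * N e ⌊1/ε⌋₊) := by
        rw [Finset.sum_const, Finset.card_univ, Fintype.card_fin, smul_eq_mul]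

end main


end Stmt19

open Stmt19 in
set_option maxHeartbeats 1200000 in
theorem stmt19 (d : ℕ) (hd : 1 ≤ d) (a b : ℤ → ℝ)
    (ha : ∀ ℓ : ℤ, a ℓ = 1 / (1 + |(ℓ : ℝ)|))
    (hb0 : b 0 = 1) (hbpos : ∀ ℓ : ℤ, 0 < b ℓ) (hble : ∀ ℓ : ℤ, ℓ ≠ 0 → b ℓ ≤ 1)
    (hlim : Tendsto (fun ℓ : ℤ => a ℓ / b ℓ) cofinite (nhds 1)) :
    Tendsto
      (fun ε : ℝ =>
        ((Set.ncard {k : Fin d → ℤ | ε ≤ ∏ j, b (k j)} : ℝ) /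
          (Set.ncard {k : Fin d → ℤ | ε ≤ ∏ j, a (k j)} : ℝ)))
      (nhdsWithin 0 (Set.Ioi 0)) (nhds 1) := by
  obtain ⟨e, rfl⟩ : ∃ e, d = e+1 := ⟨d-1, by omega⟩
  have hb1 : ∀ ℓ : ℤ, b ℓ ≤ 1 := by
    intro ℓ
    rcases eq_or_ne ℓ 0 with rfl | h
    · rw [hb0]
    · exact hble ℓ h
  have hapos := apos a ha
  -- construct global constant C with b ≤ C * a
  have hhalf : ∀ᶠ ℓ : ℤ in cofinite, |a ℓ/b ℓ - 1| < 1/2 := by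
    have := Metric.tendsto_nhds.1 hlim (1/2) (by norm_num)
    simpa [Real.dist_eq] using this
  have hF0 : {ℓ : ℤ | ¬ |a ℓ/b ℓ - 1| < 1/2}.Finite := Filter.eventually_cofinite.1 hhalf
  set C : ℝ := 2 + ∑ ℓ ∈ hF0.toFinset, (b ℓ / a ℓ) with hCdef
  have hsum_nonneg : 0 ≤ ∑ ℓ ∈ hF0.toFinset, (b ℓ / a ℓ) :=
    Finset.sum_nonneg fun ℓ _ => le_of_lt (div_pos (hbpos ℓ) (hapos ℓ))
  have hC1 : (1:ℝ) ≤ C := by rw [hCdef]; linarith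
  have hCb : ∀ ℓ : ℤ, b ℓ ≤ C * a ℓ := by
    intro ℓ
    by_cases hmem : ℓ ∈ {ℓ : ℤ | ¬ |a ℓ/b ℓ - 1| < 1/2}
    · have h1 : b ℓ / a ℓ ≤ ∑ ℓ' ∈ hF0.toFinset, (b ℓ' / a ℓ') :=
        Finset.single_le_sum (f := fun ℓ' => b ℓ' / a ℓ')
          (fun ℓ' _ => le_of_lt (div_pos (hbpos ℓ') (hapos ℓ'))) (hF0.mem_toFinset.2 hmem)
      have h2 : b ℓ / a ℓ ≤ C := by rw [hCdef]; linarith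
      rw [div_le_iff₀ (hapos ℓ)] at h2
      linarith [h2]
    · simp only [Set.mem_setOf_eq, not_not] at hmem
      rw [abs_sub_lt_iff] at hmem
      have h1 : 1/2 < a ℓ/b ℓ := by linarith [hmem.2]
      have hbℓ := hbpos ℓ
      rw [lt_div_iff₀ hbℓ] at h1
      have h2 : b ℓ ≤ 2 * a ℓ := by linarith
      have hC2 : (2:ℝ) ≤ C := by rw [hCdef]; linarith
      nlinarith [hapos ℓ]
  rw [Metric.tendsto_nhds]
  intro ε₀ hε₀
  have he1R : (0:ℝ) < (e:ℝ)+1 := by positivity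
  set δ : ℝ := min (1/(4*((e:ℝ)+1))) (ε₀/(16*((e:ℝ)+1))) with hδdef
  have hδ0 : 0 < δ := lt_min (by positivity) (by positivity)
  have hδa : δ ≤ 1/(4*((e:ℝ)+1)) := min_le_left _ _
  have hδb : δ ≤ ε₀/(16*((e:ℝ)+1)) := min_le_right _ _
  have hδd1 : ((e:ℝ)+1)*δ ≤ 1/4 := by
    have := mul_le_mul_of_nonneg_left hδa (le_of_lt he1R)
    calc ((e:ℝ)+1)*δ ≤ ((e:ℝ)+1)*(1/(4*((e:ℝ)+1))) := this
      _ = 1/4 := by field_simp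
  have hδd2 : ((e:ℝ)+1)*δ ≤ ε₀/16 := by
    have := mul_le_mul_of_nonneg_left hδb (le_of_lt he1R)
    calc ((e:ℝ)+1)*δ ≤ ((e:ℝ)+1)*(ε₀/(16*((e:ℝ)+1))) := this
      _ = ε₀/16 := by field_simp
  have hδ1 : δ < 1 := by
    have h1 : δ ≤ ((e:ℝ)+1)*δ := by nlinarith [hδ0.le]
    linarith
  -- exceptional set F at level δ
  have hev : ∀ᶠ ℓ : ℤ in cofinite, |a ℓ/b ℓ - 1| < δ := by
    have := Metric.tendsto_nhds.1 hlim δ hδ0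
    simpa [Real.dist_eq] using this
  have hF : {ℓ : ℤ | ¬ |a ℓ/b ℓ - 1| < δ}.Finite := Filter.eventually_cofinite.1 hev
  set F : Set ℤ := {ℓ : ℤ | ¬ |a ℓ/b ℓ - 1| < δ} with hFdef
  have hFa : ∀ ℓ ∉ F, (1-δ) * b ℓ ≤ a ℓ := by
    intro ℓ hℓ
    have hℓ' : |a ℓ/b ℓ - 1| < δ := by
      by_contra hcon
      exact hℓ hcon
    rw [abs_sub_lt_iff] at hℓ'
    have h1 : 1 - δ < a ℓ/b ℓ := by linarith [hℓ'.2]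
    have hbℓ := hbpos ℓ
    rw [lt_div_iff₀ hbℓ] at h1
    linarith
  have hFb : ∀ ℓ ∉ F, a ℓ ≤ (1+δ) * b ℓ := by
    intro ℓ hℓ
    have hℓ' : |a ℓ/b ℓ - 1| < δ := by
      by_contra hcon
      exact hℓ hcon
    rw [abs_sub_lt_iff] at hℓ'
    have h1 : a ℓ/b ℓ < 1 + δ := by linarith [hℓ'.1]
    have hbℓ := hbpos ℓ
    rw [div_lt_iff₀ hbℓ] at h1
    linarith
  set m : ℕ := hF.toFinset.card with hmdef
  have hd1 : 1 ≤ e+1 := by omega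
  have h1δpos : (0:ℝ) < 1 - δ := by linarith
  have hlam1 : (0:ℝ) < (1-δ)^(e+1) := pow_pos h1δpos _
  have hlam2 : (0:ℝ) < (1+δ)^(e+1) := by positivity
  have hCpos : (0:ℝ) < C := lt_of_lt_of_le one_pos hC1
  have tCe : (0:ℝ) < ((C^e)⁻¹ : ℝ) := by positivity
  have t1 := ratio_R1 (e+1) hd1 ((1-δ)^(e+1)) hlam1
  have t2 := ratio_R1 (e+1) hd1 ((1+δ)^(e+1)) hlam2
  have t3 := ratio_R2 (e+1) hd1 ((C^e)⁻¹) tCe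
  have t4 := ratio_R2 (e+1) hd1 1 one_pos
  simp only [Nat.add_sub_cancel] at t3 t4
  simp only [one_mul] at t4
  have hUb := t1.add (t3.const_mul (((e:ℝ)+1)*(m:ℝ)))
  have hLb := t2.sub (t4.const_mul (((e:ℝ)+1)*(m:ℝ)))
  -- numeric bounds on the limits
  have hber : 1 - ((e:ℝ)+1)*δ ≤ (1-δ)^(e+1) := by
    have h := one_add_mul_le_pow (a := -δ) (by linarith) (e+1)
    have hc : ((e+1:ℕ):ℝ) = (e:ℝ)+1 := by push_cast; ring
    rw [hc] at h
    have h2 : (1 + -δ : ℝ) = 1 - δ := by ring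
    rw [h2] at h
    linarith [h]
  have hB1 : 1/(1-δ)^(e+1) + (((e:ℝ)+1)*(m:ℝ))*0 < 1 + ε₀ := by
    rw [mul_zero, add_zero]
    have h34 : (1:ℝ) - ((e:ℝ)+1)*δ ≥ 3/4 := by linarith
    have hrec : 1/(1-δ)^(e+1) ≤ 1/(1 - ((e:ℝ)+1)*δ) :=
      one_div_le_one_div_of_le (by linarith) hber
    have hBern : 1/(1 - ((e:ℝ)+1)*δ) ≤ 1 + 2*(((e:ℝ)+1)*δ) := by
      rw [div_le_iff₀ (by linarith)]
      nlinarith [hδd1, mul_nonneg (le_of_lt he1R) hδ0.le]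
    have : 2*(((e:ℝ)+1)*δ) ≤ ε₀/8 := by linarith
    linarith
  have hB2 : 1 - ε₀ < 1/(1+δ)^(e+1) - (((e:ℝ)+1)*(m:ℝ))*0 := by
    rw [mul_zero, sub_zero]
    have hsq : ((1-δ)*(1+δ))^(e+1) ≤ 1 := by
      apply pow_le_one₀ (by nlinarith) (by nlinarith)
    rw [mul_pow] at hsq
    have h1 : (1-δ)^(e+1) ≤ 1/(1+δ)^(e+1) := by
      rw [le_div_iff₀ hlam2]
      exact hsq
    have h2 : ((e:ℝ)+1)*δ < ε₀ := by
      have : (0:ℝ) < ε₀/16 := by positivity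
      linarith [hδd2]
    linarith [hber]
  have e1 := hUb.eventually_lt_const hB1
  have e2 := hLb.eventually_const_lt hB2
  filter_upwards [e1, e2,
    Ioo_mem_nhdsGT_of_mem (Set.mem_Ico.2 ⟨le_rfl, one_pos⟩)] with ε h1 h2 hε
  obtain ⟨hε0, hε1⟩ := hε
  have hAcard := setA_ncard a ha (d := e+1) hε0
  have hone : (1:ℝ) ≤ 1/ε := by rw [le_div_iff₀ hε0]; linarith
  have hfl1 : 1 ≤ ⌊(1:ℝ)/ε⌋₊ := Nat.le_floor (by exact_mod_cast hone)
  have hApos : 0 < N (e+1) ⌊(1:ℝ)/ε⌋₊ := N_pos _ hfl1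
  have hAR : (0:ℝ) < (N (e+1) ⌊(1:ℝ)/ε⌋₊ : ℝ) := by exact_mod_cast hApos
  have hKU := key_upper a ha b hbpos hb1 C hC1 hCb e δ hδ0 hδ1 F hF hFa hε0
  have hKL := key_lower a ha b hbpos hb1 C hC1 hCb e δ hδ0 F hF hFb hε0
  rw [hAcard, Real.dist_eq, abs_sub_lt_iff]
  set A : ℝ := (N (e+1) ⌊(1:ℝ)/ε⌋₊ : ℝ) with hAdef
  set B : ℝ := ({k : Fin (e+1) → ℤ | ε ≤ ∏ j, b (k j)}.ncard : ℝ) with hBdef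
  have hKUR : B ≤ (N (e+1) ⌊1/((1-δ)^(e+1)*ε)⌋₊ : ℝ)
      + ((e:ℝ)+1) * ((m:ℝ) * (N e ⌊1/((C^e)⁻¹*ε)⌋₊ : ℝ)) := by
    rw [hBdef]
    have := (Nat.cast_le (α := ℝ)).2 hKU
    push_cast at this
    convert this using 2 <;> push_cast <;> ring
  have hKLR : (N (e+1) ⌊1/((1+δ)^(e+1)*ε)⌋₊ : ℝ)
      ≤ B + ((e:ℝ)+1) * ((m:ℝ) * (N e ⌊(1:ℝ)/ε⌋₊ : ℝ)) := by
    rw [hBdef]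
    have := (Nat.cast_le (α := ℝ)).2 hKL
    push_cast at this
    convert this using 2 <;> push_cast <;> ring
  have hup : B/A ≤ (N (e+1) ⌊1/((1-δ)^(e+1)*ε)⌋₊ : ℝ)/A
      + (((e:ℝ)+1)*(m:ℝ)) * ((N e ⌊1/((C^e)⁻¹*ε)⌋₊ : ℝ)/A) := by
    calc B/A ≤ ((N (e+1) ⌊1/((1-δ)^(e+1)*ε)⌋₊ : ℝ)
          + ((e:ℝ)+1) * ((m:ℝ) * (N e ⌊1/((C^e)⁻¹*ε)⌋₊ : ℝ)))/A :=
        (div_le_div_iff_of_pos_right hAR).2 hKUR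
      _ = (N (e+1) ⌊1/((1-δ)^(e+1)*ε)⌋₊ : ℝ)/A
          + (((e:ℝ)+1)*(m:ℝ)) * ((N e ⌊1/((C^e)⁻¹*ε)⌋₊ : ℝ)/A) := by ring
  have hlow : (N (e+1) ⌊1/((1+δ)^(e+1)*ε)⌋₊ : ℝ)/A
      - (((e:ℝ)+1)*(m:ℝ)) * ((N e ⌊(1:ℝ)/ε⌋₊ : ℝ)/A) ≤ B/A := by
    have hstep : (N (e+1) ⌊1/((1+δ)^(e+1)*ε)⌋₊ : ℝ)/A
        ≤ (B + ((e:ℝ)+1) * ((m:ℝ) * (N e ⌊(1:ℝ)/ε⌋₊ : ℝ)))/A :=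
      (div_le_div_iff_of_pos_right hAR).2 hKLR
    have hexp : (B + ((e:ℝ)+1) * ((m:ℝ) * (N e ⌊(1:ℝ)/ε⌋₊ : ℝ)))/A
        = B/A + (((e:ℝ)+1)*(m:ℝ)) * ((N e ⌊(1:ℝ)/ε⌋₊ : ℝ)/A) := by ring
    rw [hexp] at hstep
    linarith
  constructor
  · linarith [h1, hup]
  · linarith [h2, hlow]
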